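/- arXiv:2001.10846 — 6 statements merged into one kernel-verified Lean document; each statement's English description precedes it below -/
import Mathlib

section
/- Let -∞ < a < b < ∞, γ > 0, 0 < α < 1, and let f(t) = (t−a)^γ on [a,b]. Then for every t ∈ (a,b], the Caputo–Fabrizio fractional derivative of order α satisfies ᶜᶠ_aDᵅf(t) = (γ/α)(t−a)^{γ−1}·[1 − Γ(γ)·E_{1,γ}(−(α/(1−α))(t−a))], where E_{1,γ} is the Mittag-Leffler function. -/
open MeasureTheory Filter Set intervalIntegral



lemma myGamma_prod (γ : ℝ) (hγ : 0 < γ) (n : ℕ) :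
    Real.Gamma (n + γ) = Real.Gamma γ * ∏ i ∈ Finset.range n, (γ + i) := by
  induction n with
  | zero => simp
  | succ n ih =>
    have h1 : ((n:ℝ) + 1 + γ) = (n + γ) + 1 := by ring
    have h2 : (n:ℝ) + γ ≠ 0 := by positivity
    rw [Nat.cast_succ, h1, Real.Gamma_add_one h2, ih, Finset.prod_range_succ]
    ring

lemma alt_sum (n : ℕ) : ∀ γ : ℝ, 0 < γ →
    ∑ k ∈ Finset.range (n+1), (-1:ℝ)^k * (n.choose k) / (k + γ)
      = (Nat.factorial n : ℝ) / ∏ i ∈ Finset.range (n+1), (γ + i) := by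
  induction n with
  | zero => intro γ hγ; simp
  | succ n ih =>
    intro γ hγ
    have key : ∑ k ∈ Finset.range (n+2), (-1:ℝ)^k * ((n+1).choose k) / (k + γ)
        = (∑ k ∈ Finset.range (n+1), (-1:ℝ)^k * (n.choose k) / (k + γ))
          - ∑ k ∈ Finset.range (n+1), (-1:ℝ)^k * (n.choose k) / (k + (γ+1)) := by
      have h1 : ∑ k ∈ Finset.range (n+1), (-1:ℝ)^k * (n.choose k) / (k + (γ+1))
          = ∑ k ∈ Finset.range (n+1), (-1:ℝ)^k * (n.choose k) / ((k+1) + γ) := by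
        apply Finset.sum_congr rfl; intro k _; ring_nf
      rw [h1]
      rw [Finset.sum_range_succ' (fun k => (-1:ℝ)^k * ((n+1).choose k) / (k + γ)) (n+1)]
      rw [Finset.sum_range_succ (fun k => (-1:ℝ)^k * (n.choose k) / (k + γ)) n]
      have h2 : ∀ k, ((n+1).choose (k+1) : ℝ) = (n.choose k : ℝ) + (n.choose (k+1) : ℝ) := by
        intro k; rw [Nat.choose_succ_succ]; push_cast; ring
      have h3 : ∑ k ∈ Finset.range (n+1), (-1:ℝ)^(k+1) * ((n+1).choose (k+1)) / ((k+1) + γ)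
          = ∑ k ∈ Finset.range (n+1), ((-1:ℝ)^(k+1) * (n.choose k) / ((k+1) + γ)
            + (-1:ℝ)^(k+1) * (n.choose (k+1)) / ((k+1) + γ)) := by
        apply Finset.sum_congr rfl; intro k _; rw [h2]; ring
      have h2b : ∑ k ∈ Finset.range (n+1), (-1:ℝ)^(k+1) * ((n+1).choose (k+1)) / ((k+1:ℕ) + γ)
          = ∑ k ∈ Finset.range (n+1), (-1:ℝ)^(k+1) * ((n+1).choose (k+1)) / ((k+1) + γ) := by
        apply Finset.sum_congr rfl; intro k _; push_cast; ring_nf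
      rw [h2b, h3, Finset.sum_add_distrib]
      have h4 : ∑ k ∈ Finset.range (n+1), (-1:ℝ)^(k+1) * (n.choose (k+1)) / ((k+1) + γ)
          = ∑ k ∈ Finset.range (n+2), (-1:ℝ)^k * (n.choose k) / (k + γ) - 1/γ := by
        rw [Finset.sum_range_succ' (fun k => (-1:ℝ)^k * (n.choose k) / (k + γ)) (n+1)]
        simp
      rw [h4, Finset.sum_range_succ (fun k => (-1:ℝ)^k * (n.choose k) / (k + γ)) (n+1)]
      have h5 : ((n:ℝ)+1+γ) ≠ 0 := by positivity
      have : (n.choose (n+1) : ℝ) = 0 := by simp [Nat.choose_eq_zero_of_lt]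
      rw [this]
      have h6 : ∑ k ∈ Finset.range (n + 1), (-1:ℝ)^(k+1) * ↑(n.choose k) / ((k:ℝ)+1 + γ)
          = - ∑ k ∈ Finset.range (n + 1), (-1:ℝ)^k * ↑(n.choose k) / ((k:ℝ)+1 + γ) := by
        rw [← Finset.sum_neg_distrib]
        apply Finset.sum_congr rfl; intro k _; push_cast; ring
      rw [h6, ← Finset.sum_range_succ (fun k => (-1:ℝ)^k * (n.choose k) / (k + γ)) n]
      simp [Nat.choose_zero_right]
      ring
    have hfac : ((Nat.factorial (n+1)) : ℝ) = ((n:ℝ)+1) * (Nat.factorial n) := by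
      rw [Nat.factorial_succ]; push_cast; ring
    rw [key, ih γ hγ, ih (γ+1) (by positivity), hfac]
    have hne : ∀ m : ℕ, (∏ i ∈ Finset.range m, (γ + (i:ℝ))) ≠ 0 := by
      intro m
      apply Finset.prod_ne_zero_iff.2
      intro i _; positivity
    have hprod1 : ∏ i ∈ Finset.range (n+1), (γ + 1 + (i:ℝ))
        = ∏ i ∈ Finset.range (n+1), (γ + ((i:ℝ)+1)) := by
      apply Finset.prod_congr rfl; intro i _; ring
    have hprod2 : ∏ i ∈ Finset.range (n+1), (γ + ((i:ℝ)+1))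
        = (∏ i ∈ Finset.range (n+2), (γ + (i:ℝ))) / γ := by
      rw [Finset.prod_range_succ' (fun i => γ + (i:ℝ)) (n+1)]
      push_cast
      field_simp
      ring
    rw [hprod1, hprod2]
    have h7 := hne (n+2)
    have h8 := hne (n+1)
    have hlast : ∏ i ∈ Finset.range (n+2), (γ + (i:ℝ))
        = (∏ i ∈ Finset.range (n+1), (γ + (i:ℝ))) * (γ + (n+1)) := by
      rw [Finset.prod_range_succ]; push_cast; ring
    rw [hlast] at h7 ⊢
    have h9 : γ + ((n:ℝ)+1) ≠ 0 := by positivity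
    have h10 : γ ≠ 0 := ne_of_gt hγ
    field_simp
    push_cast
    ring

lemma Gamma_pos_nat (γ : ℝ) (hγ : 0 < γ) (k : ℕ) : 0 < Real.Gamma (k + γ) :=
  Real.Gamma_pos_of_pos (by positivity)

lemma summable_ml (γ z : ℝ) (hγ : 0 < γ) :
    Summable (fun k : ℕ => z ^ k / Real.Gamma (k + γ)) := by
  apply summable_of_ratio_norm_eventually_le (r := 1/2) (by norm_num)
  filter_upwards [Filter.eventually_ge_atTop (⌈2 * |z|⌉₊)] with k hk
  have hk' : 2 * |z| ≤ k := le_trans (Nat.le_ceil _) (by exact_mod_cast hk)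
  have hG := Gamma_pos_nat γ hγ k
  have hkγ : (0:ℝ) < (k:ℝ) + γ := by positivity
  have h1 : Real.Gamma (((k:ℕ)+1 : ℕ) + γ) = ((k:ℝ) + γ) * Real.Gamma ((k:ℝ) + γ) := by
    push_cast
    have : ((k:ℝ) + 1 + γ) = ((k:ℝ) + γ) + 1 := by ring
    rw [this, Real.Gamma_add_one (by positivity)]
  have e1 : ‖z^(k+1)/Real.Gamma (((k:ℕ)+1:ℕ) + γ)‖
      = |z|^(k+1) / (((k:ℝ)+γ) * Real.Gamma ((k:ℝ)+γ)) := by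
    rw [h1, norm_div, norm_pow]
    simp [Real.norm_eq_abs, abs_mul, abs_of_pos hG, abs_of_pos hkγ]
  have e2 : ‖z^k/Real.Gamma ((k:ℝ) + γ)‖ = |z|^k / Real.Gamma ((k:ℝ)+γ) := by
    rw [norm_div, norm_pow, Real.norm_eq_abs, Real.norm_eq_abs, abs_of_pos hG]
  rw [e1, e2]
  have step : |z| / ((k:ℝ)+γ) ≤ 1/2 := by
    rw [div_le_iff₀ hkγ]
    nlinarith
  calc |z|^(k+1)/(((k:ℝ)+γ) * Real.Gamma ((k:ℝ)+γ))
      = (|z|^k / Real.Gamma ((k:ℝ)+γ)) * (|z| / ((k:ℝ)+γ)) := by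
        rw [pow_succ, div_mul_div_comm, mul_comm (Real.Gamma ((k:ℝ)+γ)) ((k:ℝ)+γ)]
    _ ≤ (|z|^k / Real.Gamma ((k:ℝ)+γ)) * (1/2) :=
        mul_le_mul_of_nonneg_left step (by positivity)
    _ = 1/2 * (|z|^k / Real.Gamma ((k:ℝ)+γ)) := by ring

lemma summable_G (γ z : ℝ) (hγ : 0 < γ) :
    Summable (fun k : ℕ => z ^ k / ((Nat.factorial k : ℝ) * ((k:ℝ) + γ))) := by
  apply Summable.of_norm_bounded (g := fun k : ℕ => γ⁻¹ * (|z| ^ k / (Nat.factorial k : ℝ)))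
  · exact (Real.summable_pow_div_factorial |z|).mul_left _
  · intro k
    have hf : (0:ℝ) < (Nat.factorial k : ℝ) := by
      exact_mod_cast Nat.factorial_pos k
    have hkγ : (0:ℝ) < (k:ℝ) + γ := by positivity
    rw [norm_div, norm_pow, Real.norm_eq_abs, Real.norm_eq_abs,
      abs_of_pos (by positivity : (0:ℝ) < (Nat.factorial k : ℝ) * ((k:ℝ)+γ))]
    calc |z|^k / ((Nat.factorial k : ℝ) * ((k:ℝ)+γ))
        ≤ |z|^k / ((Nat.factorial k : ℝ) * γ) := by
          gcongr
          all_goals first | positivity | exact Or.inl trivial | linarith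
    _ = γ⁻¹ * (|z|^k / (Nat.factorial k : ℝ)) := by rw [inv_mul_eq_div, div_div]





lemma cauchy_term (γ z : ℝ) (hγ : 0 < γ) (n : ℕ) :
    ∑ kl ∈ Finset.HasAntidiagonal.antidiagonal n,
        ((-z)^kl.1 / (Nat.factorial kl.1 : ℝ)) *
          (z^kl.2 / ((Nat.factorial kl.2 : ℝ) * ((kl.2:ℝ)+γ)))
      = (-1)^n * z^n * Real.Gamma γ / Real.Gamma ((n:ℝ) + 1 + γ) := by
  rw [Finset.Nat.sum_antidiagonal_eq_sum_range_succ_mk]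
  rw [← Finset.sum_range_reflect]
  have key : ∀ j ∈ Finset.range (n+1),
      ((-z)^(n+1-1-j) / (Nat.factorial (n+1-1-j) : ℝ)) *
        (z^(n-(n+1-1-j)) / ((Nat.factorial (n-(n+1-1-j)) : ℝ) * ((((n-(n+1-1-j) : ℕ)) : ℝ) + γ)))
      = ((-1)^n * z^n / (Nat.factorial n : ℝ)) * ((-1:ℝ)^j * (n.choose j) / ((j:ℝ) + γ)) := by
    intro j hj
    have hjn : j ≤ n := Nat.lt_succ_iff.mp (Finset.mem_range.mp hj)
    have e0 : n + 1 - 1 - j = n - j := by omega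
    have e1 : n - (n - j) = j := Nat.sub_sub_self hjn
    rw [e0, e1]
    have hpow : (-z)^(n-j) * z^j = (-1:ℝ)^n * (-1)^j * z^n := by
      have h2 : z^(n-j) * z^j = z^n := by
        rw [← pow_add]; congr 1; omega
      have hs : (-1:ℝ)^n * (-1)^j = (-1)^(n-j) := by
        rw [← pow_add, show n + j = (n - j) + 2*j by omega, pow_add, pow_mul]
        norm_num
      rw [neg_pow, mul_assoc, h2, ← hs]
      try ring
    have hfac : ((n.choose j : ℝ)) * (Nat.factorial j) * (Nat.factorial (n-j)) = (Nat.factorial n : ℝ) := by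
      exact_mod_cast congrArg (Nat.cast (R := ℝ)) (Nat.choose_mul_factorial_mul_factorial hjn)
    have hfj : ((Nat.factorial j : ℝ)) ≠ 0 := by positivity
    have hfnj : ((Nat.factorial (n-j) : ℝ)) ≠ 0 := by positivity
    have hfn : ((Nat.factorial n : ℝ)) ≠ 0 := by positivity
    have hjγ : ((j:ℝ) + γ) ≠ 0 := by positivity
    rw [div_mul_div_comm, div_mul_div_comm, hpow]
    rw [div_eq_div_iff (by positivity) (by positivity)]
    linear_combination (-((-1:ℝ)^n * (-1)^j * z^n * ((j:ℝ)+γ))) * hfac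
  have tr : ∑ j ∈ Finset.range (n+1),
      ((-z)^(n+1-1-j) / (Nat.factorial (n+1-1-j) : ℝ)) *
        (z^(n-(n+1-1-j)) / ((Nat.factorial (n-(n+1-1-j)) : ℝ) * ((((n-(n+1-1-j) : ℕ)) : ℝ) + γ)))
      = ((-1)^n * z^n / (Nat.factorial n : ℝ)) *
          ∑ j ∈ Finset.range (n+1), ((-1:ℝ)^j * (n.choose j) / ((j:ℝ) + γ)) := by
    rw [Finset.mul_sum]; exact Finset.sum_congr rfl key
  rw [tr, alt_sum n γ hγ]
  have hΓ : Real.Gamma ((n:ℝ) + 1 + γ) = Real.Gamma γ * ∏ i ∈ Finset.range (n+1), (γ + i) := by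
    have := myGamma_prod γ hγ (n+1)
    push_cast at this ⊢
    rw [← this]
  rw [hΓ]
  have hΓγ : Real.Gamma γ ≠ 0 := ne_of_gt (Real.Gamma_pos_of_pos hγ)
  have hprod : (∏ i ∈ Finset.range (n+1), (γ + (i:ℝ))) ≠ 0 :=
    Finset.prod_ne_zero_iff.2 (fun i _ => by positivity)
  have hfn : ((Nat.factorial n : ℝ)) ≠ 0 := by positivity
  field_simp

lemma coreB (γ z : ℝ) (hγ : 0 < γ) :
    z * Real.exp (-z) * ∑' k : ℕ, z ^ k / ((Nat.factorial k : ℝ) * ((k:ℝ) + γ))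
      = 1 - Real.Gamma γ * ∑' k : ℕ, (-z) ^ k / Real.Gamma ((k:ℝ) + γ) := by
  have hΓγ : Real.Gamma γ ≠ 0 := ne_of_gt (Real.Gamma_pos_of_pos hγ)
  have hexp : Real.exp (-z) = ∑' j : ℕ, (-z)^j / (Nat.factorial j : ℝ) := by
    rw [Real.exp_eq_exp_ℝ, NormedSpace.exp_eq_tsum_div]
  have hA : Summable (fun j : ℕ => ‖(-z)^j / (Nat.factorial j : ℝ)‖) := by
    apply (Real.summable_pow_div_factorial |z|).congr
    intro j
    simp [Real.norm_eq_abs, abs_div, abs_pow, abs_neg, Nat.abs_cast]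
  have hB : Summable (fun k : ℕ => ‖z^k / ((Nat.factorial k : ℝ) * ((k:ℝ) + γ))‖) := by
    apply ((summable_G γ z hγ).abs).congr
    intro k
    exact (Real.norm_eq_abs _).symm
  rw [hexp, mul_assoc, tsum_mul_tsum_eq_tsum_sum_antidiagonal_of_summable_norm hA hB]
  rw [tsum_congr (cauchy_term γ z hγ)]
  rw [Summable.tsum_eq_zero_add (summable_ml γ (-z) hγ)]
  simp only [pow_zero, Nat.cast_zero, zero_add]
  rw [mul_add, mul_one_div, div_self hΓγ]
  rw [← tsum_mul_left (a := z), ← tsum_mul_left (a := Real.Gamma γ)]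
  rw [sub_add_eq_sub_sub, sub_self, zero_sub, ← tsum_neg]
  exact tsum_congr fun k => by
    rw [pow_succ, neg_pow]
    push_cast
    ring

lemma knn (k : ℕ) : (0:ℝ) ≤ (k:ℝ) := Nat.cast_nonneg k

lemma int_rpow_Ioc (x r : ℝ) (hx : 0 < x) (hr : -1 < r) :
    ∫ s in Ioc (0:ℝ) x, s ^ r = x ^ (r+1) / (r+1) := by
  rw [← integral_of_le hx.le,
    integral_rpow (Or.inl hr), Real.zero_rpow (by linarith)]
  ring

lemma integrable_piece (γ lam x : ℝ) (hγ : 0 < γ) (hx : 0 < x) (k : ℕ) :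
    IntegrableOn (fun s : ℝ => (γ * lam^k / (Nat.factorial k : ℝ)) * s ^ (γ - 1 + (k:ℝ)))
      (Ioc (0:ℝ) x) volume := by
  have h : IntervalIntegrable (fun s : ℝ => s ^ (γ - 1 + (k:ℝ))) volume 0 x :=
    intervalIntegrable_rpow' (by linarith [knn k])
  exact ((intervalIntegrable_iff_integrableOn_Ioc_of_le hx.le).mp h).const_mul _

lemma val_integral_piece (γ lam x : ℝ) (hγ : 0 < γ) (hx : 0 < x) (k : ℕ) :
    ∫ s in Ioc (0:ℝ) x, (γ * lam^k / (Nat.factorial k : ℝ)) * s ^ (γ - 1 + (k:ℝ))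
      = (γ * lam^k / (Nat.factorial k : ℝ)) * (x ^ (γ + (k:ℝ)) / (γ + (k:ℝ))) := by
  rw [MeasureTheory.integral_const_mul, int_rpow_Ioc x _ hx (by linarith [knn k]),
    show γ - 1 + (k:ℝ) + 1 = γ + (k:ℝ) by ring]

lemma norm_integral_piece (γ lam x : ℝ) (hγ : 0 < γ) (hx : 0 < x) (hlam : 0 < lam) (k : ℕ) :
    ∫ s in Ioc (0:ℝ) x, ‖(γ * lam^k / (Nat.factorial k : ℝ)) * s ^ (γ - 1 + (k:ℝ))‖
      = (γ * lam^k / (Nat.factorial k : ℝ)) * (x ^ (γ + (k:ℝ)) / (γ + (k:ℝ))) := by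
  have heq : ∀ s ∈ Ioc (0:ℝ) x,
      ‖(γ * lam^k / (Nat.factorial k : ℝ)) * s ^ (γ - 1 + (k:ℝ))‖
        = (γ * lam^k / (Nat.factorial k : ℝ)) * s ^ (γ - 1 + (k:ℝ)) := by
    intro s hs
    rw [Real.norm_eq_abs, abs_of_nonneg]
    have := Real.rpow_nonneg hs.1.le (γ - 1 + (k:ℝ))
    positivity
  rw [setIntegral_congr_fun measurableSet_Ioc heq, val_integral_piece γ lam x hγ hx k]

lemma integral_exp_piece (γ lam x : ℝ) (hγ : 0 < γ) (hx : 0 < x) (hlam : 0 < lam) :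
    ∫ s in Ioc (0:ℝ) x, γ * s ^ (γ-1) * Real.exp (lam * s)
      = ∑' k : ℕ, (γ * lam^k / (Nat.factorial k : ℝ)) * (x ^ (γ + (k:ℝ)) / (γ + (k:ℝ))) := by
  have hswap :
      ∑' k : ℕ, (∫ s in Ioc (0:ℝ) x, (γ * lam^k / (Nat.factorial k : ℝ)) * s ^ (γ - 1 + (k:ℝ)))
        = ∫ s in Ioc (0:ℝ) x,
            (∑' k : ℕ, (γ * lam^k / (Nat.factorial k : ℝ)) * s ^ (γ - 1 + (k:ℝ))) := by
    apply MeasureTheory.integral_tsum_of_summable_integral_norm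
    · exact fun k => integrable_piece γ lam x hγ hx k
    · apply Summable.of_nonneg_of_le
        (fun k => integral_nonneg_of_ae ?_)
        (fun k => ?_)
        ((Real.summable_pow_div_factorial (lam*x)).mul_left (γ * x ^ γ / γ))
      · filter_upwards with s using norm_nonneg _
      · rw [norm_integral_piece γ lam x hγ hx hlam k]
        have h1 : x ^ (γ + (k:ℝ)) = x ^ γ * x ^ (k:ℕ) := by
          rw [Real.rpow_add hx, Real.rpow_natCast]
        rw [h1]
        calc γ * lam^k / (Nat.factorial k : ℝ) * (x ^ γ * x ^ k / (γ + (k:ℝ)))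
            ≤ γ * lam^k / (Nat.factorial k : ℝ) * (x ^ γ * x ^ k / γ) := by
              gcongr
              all_goals first | positivity | exact Or.inl trivial | linarith [knn k]
          _ = γ * x ^ γ / γ * ((lam*x)^k / (Nat.factorial k : ℝ)) := by
              rw [mul_pow]; field_simp
  have hpt : ∀ s ∈ Ioc (0:ℝ) x,
      γ * s ^ (γ-1) * Real.exp (lam * s)
        = ∑' k : ℕ, (γ * lam^k / (Nat.factorial k : ℝ)) * s ^ (γ - 1 + (k:ℝ)) := by
    intro s hs
    have hs0 : 0 < s := hs.1
    rw [Real.exp_eq_exp_ℝ, NormedSpace.exp_eq_tsum_div, ← tsum_mul_left]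
    apply tsum_congr
    intro k
    rw [Real.rpow_add hs0 (γ-1) (k:ℝ), Real.rpow_natCast, mul_pow]
    field_simp
  rw [setIntegral_congr_fun measurableSet_Ioc hpt, ← hswap]
  apply tsum_congr
  intro k
  exact val_integral_piece γ lam x hγ hx k

/-- Caputo–Fabrizio fractional derivative of order `α` with base point `a`,
expressed in terms of the a.e. derivative `f'`. -/
noncomputable def cfD (a α : ℝ) (f' : ℝ → ℝ) (t : ℝ) : ℝ :=
  (1 / (1 - α)) * ∫ τ in a..t, f' τ * Real.exp (-(α / (1 - α)) * (t - τ))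

/-- Mittag-Leffler function `E_{ρ,ω}(t) = ∑_{k≥0} t^k / Γ(ρk + ω)`. -/
noncomputable def mittagLeffler (ρ ω t : ℝ) : ℝ :=
  ∑' k : ℕ, t ^ k / Real.Gamma (ρ * (k : ℝ) + ω)

/-- For `f(t) = (t-a)^γ` on `[a,b]` (`γ > 0`, `0 < α < 1`) and every `t ∈ (a,b]`,
`ᶜᶠ_aDᵅf(t) = (γ/α)(t-a)^{γ-1}[1 - Γ(γ)E_{1,γ}(-(α/(1-α))(t-a))]`. -/
theorem cf_deriv_power (a b γ α : ℝ) (hab : a < b) (hγ : 0 < γ)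
    (hα0 : 0 < α) (hα1 : α < 1) :
    ∀ t ∈ Set.Ioc a b,
      cfD a α (fun τ => γ * (τ - a) ^ (γ - 1)) t =
        (γ / α) * (t - a) ^ (γ - 1) *
          (1 - Real.Gamma γ * mittagLeffler 1 γ (-(α / (1 - α)) * (t - a))) := by
  intro t ht
  have hx : 0 < t - a := sub_pos.mpr ht.1
  have h1α : 0 < 1 - α := by linarith
  have hlam : 0 < α / (1 - α) := by positivity
  have hα : α ≠ 0 := ne_of_gt hα0
  have h1α' : (1 - α) ≠ 0 := ne_of_gt h1α
  simp only [cfD]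
  have hfun : (fun τ => (γ * (τ - a) ^ (γ-1)) * Real.exp (-(α/(1-α)) * (t - τ)))
      = fun τ => Real.exp (-(α/(1-α) * (t - a))) *
          (γ * (τ - a) ^ (γ-1) * Real.exp ((α/(1-α)) * (τ - a))) := by
    funext τ
    have he : (-(α/(1-α)) * (t - τ))
        = (-(α/(1-α) * (t - a))) + (α/(1-α)) * (τ - a) := by ring
    rw [he, Real.exp_add]
    ring
  rw [hfun, intervalIntegral.integral_const_mul]
  have hcv := intervalIntegral.integral_comp_sub_right
    (a := a) (b := t) (fun s => γ * s ^ (γ-1) * Real.exp ((α/(1-α)) * s)) a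
  rw [hcv, sub_self, intervalIntegral.integral_of_le hx.le,
    integral_exp_piece γ (α/(1-α)) (t-a) hγ hx hlam]
  have htsum : ∑' k : ℕ, (γ * (α/(1-α))^k / (Nat.factorial k : ℝ))
        * ((t-a) ^ (γ + (k:ℝ)) / (γ + (k:ℝ)))
      = γ * (t-a) ^ γ *
        ∑' k : ℕ, ((α/(1-α)) * (t-a)) ^ k / ((Nat.factorial k : ℝ) * ((k:ℝ) + γ)) := by
    rw [← tsum_mul_left]
    apply tsum_congr; intro k
    rw [Real.rpow_add hx γ (k:ℝ), Real.rpow_natCast, mul_pow]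
    have hkγ : ((k:ℝ) + γ) ≠ 0 := by positivity
    have hfk : ((Nat.factorial k:ℝ)) ≠ 0 := by positivity
    field_simp
    ring
  rw [htsum]
  have hml : mittagLeffler 1 γ (-(α/(1-α)) * (t-a))
      = ∑' k : ℕ, (-((α/(1-α)) * (t-a))) ^ k / Real.Gamma ((k:ℝ) + γ) := by
    rw [mittagLeffler]
    apply tsum_congr; intro k
    rw [one_mul, neg_mul]
  rw [hml, ← coreB γ ((α/(1-α)) * (t-a)) hγ]
  have hxγ : (t-a) ^ γ = (t-a) ^ (γ - 1) * (t-a) := by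
    nth_rewrite 1 [show γ = (γ - 1) + 1 by ring]
    rw [Real.rpow_add hx, Real.rpow_one]
  rw [hxγ]
  field_simp
end

section
/- Let -∞ < a < b < ∞ and let f belong to W^{1,1}(a,b). Then for almost every t ∈ (a,b), lim_{α→1⁻} ᶜ_aDᵅf(t) = f'(t), i.e. the Caputo fractional derivative of order α converges to the ordinary derivative as α increases to 1, almost everywhere in (a,b). -/
open MeasureTheory Filter Set

/-- Caputo fractional derivative of order `α` with base point `a`,
expressed in terms of the a.e. derivative `f'`. -/
noncomputable def caputoD (a α : ℝ) (f' : ℝ → ℝ) (t : ℝ) : ℝ :=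
  (1 / Real.Gamma (1 - α)) * ∫ τ in a..t, f' τ * (t - τ) ^ (-α)

lemma kern_eq {α δ : ℝ} (hα : 0 < α) (hδ : 0 < δ) {s : ℝ} (hs : 0 < s) (hsδ : s ≤ δ) :
    ENNReal.ofReal (s ^ (-α)) = ENNReal.ofReal (δ ^ (-α)) +
      ∫⁻ u in Set.Ioc s δ, ENNReal.ofReal (α * u ^ (-α - 1)) := by
  have h0 : (0:ℝ) ∉ Set.uIcc s δ := by
    rw [Set.uIcc_of_le hsδ]; intro h; exact absurd h.1 (not_le.2 hs)
  have hInt : IntegrableOn (fun u : ℝ => α * u ^ (-α - 1)) (Set.Ioc s δ) := by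
    have := (intervalIntegral.intervalIntegrable_rpow (μ := volume) (r := -α - 1) (a := s) (b := δ)
      (Or.inr h0)).const_mul α
    rw [intervalIntegrable_iff_integrableOn_Ioc_of_le hsδ] at this
    exact this
  have hnn : 0 ≤ᵐ[volume.restrict (Set.Ioc s δ)] fun u : ℝ => α * u ^ (-α - 1) := by
    filter_upwards [ae_restrict_mem measurableSet_Ioc] with u hu
    have : (0:ℝ) < u := hs.trans hu.1
    positivity
  rw [← ofReal_integral_eq_lintegral_ofReal hInt hnn]
  have hval : ∫ u in Set.Ioc s δ, α * u ^ (-α - 1) = s ^ (-α) - δ ^ (-α) := by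
    rw [← intervalIntegral.integral_of_le hsδ]
    rw [intervalIntegral.integral_const_mul, integral_rpow (Or.inr ⟨by linarith, h0⟩)]
    have : -α - 1 + 1 = -α := by ring
    rw [this]
    rw [div_neg, mul_neg, ← mul_div_assoc, mul_div_cancel_left₀ _ hα.ne', neg_sub]
  rw [hval, ← ENNReal.ofReal_add (by positivity) (by
      have : δ ^ (-α) ≤ s ^ (-α) := Real.rpow_le_rpow_of_nonpos hs hsδ (by linarith)
      linarith)]
  ring_nf

lemma tonelli_eq {φ : ℝ → ENNReal} (hφ : Measurable φ) {t δ α : ℝ} (hα : 0 < α) (hδ : 0 < δ) :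
    ∫⁻ τ in Set.Ioc (t - δ) t, φ τ * ENNReal.ofReal ((t - τ) ^ (-α)) =
      ENNReal.ofReal (δ ^ (-α)) * (∫⁻ τ in Set.Ioc (t - δ) t, φ τ) +
        ∫⁻ u in Set.Ioc 0 δ, ENNReal.ofReal (α * u ^ (-α - 1)) *
          ∫⁻ τ in Set.Ioc (t - u) t, φ τ := by
  set ψ : ℝ → ENNReal := fun u => ENNReal.ofReal (α * u ^ (-α - 1)) with hψdef
  have hψ : Measurable ψ := by
    apply ENNReal.measurable_ofReal.comp; fun_prop
  have hset : MeasurableSet {p : ℝ × ℝ | t - p.1 < p.2} :=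
    measurableSet_lt (measurable_const.sub measurable_fst) measurable_snd
  set F : ℝ × ℝ → ENNReal :=
    ({p : ℝ × ℝ | t - p.1 < p.2}).indicator (fun p => φ p.1 * ψ p.2) with hFdef
  have hF : Measurable F :=
    ((hφ.comp measurable_fst).mul (hψ.comp measurable_snd)).indicator hset
  have hIoo1 : ∫⁻ τ in Set.Ioc (t - δ) t, φ τ * ENNReal.ofReal ((t - τ) ^ (-α)) =
      ∫⁻ τ in Set.Ioo (t - δ) t, φ τ * ENNReal.ofReal ((t - τ) ^ (-α)) :=
    setLIntegral_congr (Ioo_ae_eq_Ioc (a := t - δ) (b := t)).symm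
  have hIoo2 : ∫⁻ τ in Set.Ioc (t - δ) t, φ τ = ∫⁻ τ in Set.Ioo (t - δ) t, φ τ :=
    setLIntegral_congr (Ioo_ae_eq_Ioc (a := t - δ) (b := t)).symm
  rw [hIoo1, hIoo2]
  have key : ∀ τ ∈ Set.Ioo (t - δ) t,
      φ τ * ENNReal.ofReal ((t - τ) ^ (-α)) =
      φ τ * ENNReal.ofReal (δ ^ (-α)) + ∫⁻ u in Set.Ioc 0 δ, F (τ, u) := by
    intro τ hτ
    have hs : 0 < t - τ := by simp only [Set.mem_Ioo] at hτ; linarith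
    have hsδ : t - τ ≤ δ := by simp only [Set.mem_Ioo] at hτ; linarith
    rw [kern_eq hα hδ hs hsδ, mul_add]
    congr 1
    have hind : ∫⁻ u in Set.Ioc (t - τ) δ, ψ u =
        ∫⁻ u in Set.Ioc 0 δ, (Set.Ioi (t - τ)).indicator ψ u := by
      rw [lintegral_indicator measurableSet_Ioi,
        Measure.restrict_restrict measurableSet_Ioi]
      have : Set.Ioi (t - τ) ∩ Set.Ioc 0 δ = Set.Ioc (t - τ) δ := by
        ext u
        simp only [Set.mem_inter_iff, Set.mem_Ioi, Set.mem_Ioc]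
        constructor
        · rintro ⟨h1, _, h2⟩; exact ⟨h1, h2⟩
        · rintro ⟨h1, h3⟩; exact ⟨h1, hs.trans h1, h3⟩
      rw [this]
    show φ τ * ∫⁻ u in Set.Ioc (t - τ) δ, ψ u = _
    rw [hind, ← lintegral_const_mul _ (hψ.indicator measurableSet_Ioi)]
    refine lintegral_congr fun u => ?_
    by_cases h : t - τ < u <;>
      simp [hFdef, Set.indicator_apply, h, Set.mem_Ioi]
  rw [setLIntegral_congr_fun measurableSet_Ioo key]
  rw [lintegral_add_left (f := fun τ => φ τ * ENNReal.ofReal (δ ^ (-α))) (hφ.mul measurable_const)]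
  congr 1
  · rw [lintegral_mul_const _ hφ, mul_comm]
  · have swap := lintegral_lintegral_swap (μ := volume.restrict (Set.Ioo (t - δ) t))
      (ν := volume.restrict (Set.Ioc 0 δ)) (f := fun τ u => F (τ, u)) hF.aemeasurable
    rw [swap]
    refine setLIntegral_congr_fun measurableSet_Ioc ?_
    intro u hu
    simp only [Set.mem_Ioc] at hu
    beta_reduce
    have hptwise : ∀ τ : ℝ, F (τ, u) = (Set.Ioi (t - u)).indicator (fun τ => φ τ * ψ u) τ := by
      intro τ
      have : t - τ < u ↔ t - u < τ := by constructor <;> intro h <;> linarith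
      by_cases h : t - u < τ <;>
        simp [hFdef, Set.indicator_apply, Set.mem_Ioi, Set.mem_setOf_eq, this, h]
    rw [lintegral_congr hptwise, lintegral_indicator measurableSet_Ioi,
      Measure.restrict_restrict measurableSet_Ioi]
    have hseteq : Set.Ioi (t - u) ∩ Set.Ioo (t - δ) t = Set.Ioo (t - u) t := by
      ext τ
      simp only [Set.mem_inter_iff, Set.mem_Ioi, Set.mem_Ioo]
      constructor
      · rintro ⟨h1, _, h3⟩; exact ⟨h1, h3⟩
      · rintro ⟨h1, h2⟩; exact ⟨h1, by linarith, h2⟩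
    rw [hseteq, lintegral_mul_const _ hφ, mul_comm]
    congr 1
    exact setLIntegral_congr (Ioo_ae_eq_Ioc (a := t - u) (b := t))

lemma err_bound {φ : ℝ → ENNReal} (hφ : Measurable φ) {a t δ α ε : ℝ}
    (hα : 0 < α) (hα1 : α < 1) (hδ : 0 < δ) (hδc : δ ≤ t - a) (hε : 0 ≤ ε)
    (hν : ∀ u : ℝ, 0 < u → u ≤ δ →
      (∫⁻ τ in Set.Ioc (t - u) t, φ τ) ≤ ENNReal.ofReal (ε * u)) :
    ∫⁻ τ in Set.Ioc a t, φ τ * ENNReal.ofReal ((t - τ) ^ (-α)) ≤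
      ENNReal.ofReal (δ ^ (-α)) * ((∫⁻ τ in Set.Ioc a t, φ τ) + ENNReal.ofReal (ε * δ)) +
        ENNReal.ofReal (ε * α * (δ ^ (1 - α) / (1 - α))) := by
  have h1 : a ≤ t - δ := by linarith
  have h2 : t - δ ≤ t := by linarith
  have hsplit : ∫⁻ τ in Set.Ioc a t, φ τ * ENNReal.ofReal ((t - τ) ^ (-α)) =
      (∫⁻ τ in Set.Ioc a (t - δ), φ τ * ENNReal.ofReal ((t - τ) ^ (-α))) +
        ∫⁻ τ in Set.Ioc (t - δ) t, φ τ * ENNReal.ofReal ((t - τ) ^ (-α)) := by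
    rw [← lintegral_union measurableSet_Ioc (Set.Ioc_disjoint_Ioc_of_le le_rfl),
      Set.Ioc_union_Ioc_eq_Ioc h1 h2]
  rw [hsplit]
  have hfar : ∫⁻ τ in Set.Ioc a (t - δ), φ τ * ENNReal.ofReal ((t - τ) ^ (-α)) ≤
      ENNReal.ofReal (δ ^ (-α)) * ∫⁻ τ in Set.Ioc a t, φ τ := by
    have step1 : ∫⁻ τ in Set.Ioc a (t - δ), φ τ * ENNReal.ofReal ((t - τ) ^ (-α)) ≤
        ∫⁻ τ in Set.Ioc a (t - δ), φ τ * ENNReal.ofReal (δ ^ (-α)) := by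
      refine setLIntegral_mono' measurableSet_Ioc fun τ hτ => ?_
      refine mul_le_mul_right (ENNReal.ofReal_le_ofReal ?_) _
      exact Real.rpow_le_rpow_of_nonpos hδ (by simp only [Set.mem_Ioc] at hτ; linarith)
        (by linarith)
    refine step1.trans ?_
    rw [lintegral_mul_const _ hφ, mul_comm]
    exact mul_le_mul_right (lintegral_mono_set (Set.Ioc_subset_Ioc_right h2)) _
  have hnear : ∫⁻ τ in Set.Ioc (t - δ) t, φ τ * ENNReal.ofReal ((t - τ) ^ (-α)) ≤
      ENNReal.ofReal (δ ^ (-α)) * ENNReal.ofReal (ε * δ) +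
        ENNReal.ofReal (ε * α * (δ ^ (1 - α) / (1 - α))) := by
    rw [tonelli_eq hφ hα hδ]
    refine add_le_add (mul_le_mul_right (hν δ hδ le_rfl) _) ?_
    have hmono : ∫⁻ u in Set.Ioc 0 δ, ENNReal.ofReal (α * u ^ (-α - 1)) *
        ∫⁻ τ in Set.Ioc (t - u) t, φ τ ≤
        ∫⁻ u in Set.Ioc 0 δ, ENNReal.ofReal (ε * α * u ^ (-α)) := by
      refine setLIntegral_mono' measurableSet_Ioc fun u hu => ?_
      simp only [Set.mem_Ioc] at hu
      refine le_trans (mul_le_mul_right (hν u hu.1 hu.2) _) ?_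
      rw [← ENNReal.ofReal_mul (mul_nonneg hα.le (Real.rpow_nonneg hu.1.le _))]
      refine ENNReal.ofReal_le_ofReal (le_of_eq ?_)
      rw [show (-α : ℝ) = -α - 1 + 1 by ring, Real.rpow_add_one hu.1.ne']
      ring
    refine hmono.trans (le_of_eq ?_)
    have hInt : IntegrableOn (fun u : ℝ => ε * α * u ^ (-α)) (Set.Ioc 0 δ) := by
      have := (intervalIntegral.intervalIntegrable_rpow' (a := 0) (b := δ)
        (r := -α) (by linarith)).const_mul (ε * α)
      rwa [intervalIntegrable_iff_integrableOn_Ioc_of_le hδ.le] at this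
    have hnn : 0 ≤ᵐ[volume.restrict (Set.Ioc 0 δ)] fun u : ℝ => ε * α * u ^ (-α) := by
      filter_upwards [ae_restrict_mem measurableSet_Ioc] with u hu
      have := hu.1.le
      positivity
    rw [← ofReal_integral_eq_lintegral_ofReal hInt hnn]
    congr 1
    rw [← intervalIntegral.integral_of_le hδ.le, intervalIntegral.integral_const_mul,
      integral_rpow (Or.inl (by linarith)),
      Real.zero_rpow (by intro h; rw [show (-α + 1 : ℝ) = 1 - α by ring] at h; linarith),
      show (-α + 1 : ℝ) = 1 - α by ring]
    ring
  calc _ ≤ ENNReal.ofReal (δ ^ (-α)) * (∫⁻ τ in Set.Ioc a t, φ τ) +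
        (ENNReal.ofReal (δ ^ (-α)) * ENNReal.ofReal (ε * δ) +
          ENNReal.ofReal (ε * α * (δ ^ (1 - α) / (1 - α)))) := add_le_add hfar hnear
    _ = _ := by rw [mul_add]; ring

lemma lebesgue_pts (G : ℝ → ℝ) (hG : Integrable G) :
    ∀ᵐ t ∂(volume : Measure ℝ), ∀ ε : ℝ, 0 < ε → ∃ δ : ℝ, 0 < δ ∧
      ∀ u : ℝ, 0 < u → u ≤ δ →
        (∫⁻ τ in Set.Ioc (t - u) t, (‖G τ - G t‖₊ : ENNReal)) ≤ ENNReal.ofReal (ε * u) := by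
  filter_upwards [(Besicovitch.vitaliFamily (volume : Measure ℝ)).ae_tendsto_average_norm_sub
    hG.locallyIntegrable] with t ht
  have ht' : Tendsto (fun r : ℝ => ⨍ y in Metric.closedBall t r, ‖G y - G t‖)
      (nhdsWithin 0 (Set.Ioi 0)) (nhds 0) :=
    ht.comp (Besicovitch.tendsto_filterAt volume t)
  intro ε hε
  have hev : ∀ᶠ r in nhdsWithin 0 (Set.Ioi 0),
      (⨍ y in Metric.closedBall t r, ‖G y - G t‖) < ε / 2 :=
    ht'.eventually_lt_const (by linarith)
  obtain ⟨δ, hδ0, hδ⟩ := mem_nhdsGT_iff_exists_Ioc_subset.1 hev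
  refine ⟨δ, hδ0, fun u hu huδ => ?_⟩
  have havg : (⨍ y in Metric.closedBall t u, ‖G y - G t‖) < ε / 2 := hδ ⟨hu, huδ⟩
  have hsub : Set.Ioc (t - u) t ⊆ Metric.closedBall t u := by
    intro τ hτ
    rw [Real.closedBall_eq_Icc]
    exact ⟨hτ.1.le, hτ.2.trans (by linarith)⟩
  have hGint : IntegrableOn (fun y => G y - G t) (Metric.closedBall t u) :=
    hG.integrableOn.sub (integrableOn_const measure_closedBall_lt_top.ne)
  calc ∫⁻ τ in Set.Ioc (t - u) t, (‖G τ - G t‖₊ : ENNReal)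
      ≤ ∫⁻ τ in Metric.closedBall t u, (‖G τ - G t‖₊ : ENNReal) := lintegral_mono_set hsub
    _ = ENNReal.ofReal (∫ τ in Metric.closedBall t u, ‖G τ - G t‖) :=
        (ofReal_integral_norm_eq_lintegral_enorm hGint).symm
    _ ≤ ENNReal.ofReal (ε * u) := by
        refine ENNReal.ofReal_le_ofReal ?_
        have hvol : (volume (Metric.closedBall t u)).toReal = 2 * u := by
          rw [Real.volume_closedBall, ENNReal.toReal_ofReal (by linarith)]
        have := setAverage_eq (μ := volume) (fun y => ‖G y - G t‖) (Metric.closedBall t u)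
        rw [smul_eq_mul] at this
        have hI : ∫ τ in Metric.closedBall t u, ‖G τ - G t‖ =
            (2 * u) * ⨍ y in Metric.closedBall t u, ‖G y - G t‖ := by
          rw [this, measureReal_def, hvol, ← mul_assoc, mul_inv_cancel₀ (by linarith : (2*u : ℝ) ≠ 0), one_mul]
        rw [hI]
        calc (2 * u) * ⨍ y in Metric.closedBall t u, ‖G y - G t‖
            ≤ (2 * u) * (ε / 2) := by
              refine mul_le_mul_of_nonneg_left havg.le (by linarith)
          _ = ε * u := by ring

lemma pointwise_tendsto {a t : ℝ} (hta : a < t) (G : ℝ → ℝ) (hGm : Measurable G)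
    (hGint : Integrable G)
    (hleb : ∀ ε : ℝ, 0 < ε → ∃ δ : ℝ, 0 < δ ∧ ∀ u : ℝ, 0 < u → u ≤ δ →
      (∫⁻ τ in Set.Ioc (t - u) t, (‖G τ - G t‖₊ : ENNReal)) ≤ ENNReal.ofReal (ε * u)) :
    Tendsto (fun α => caputoD a α G t) (nhdsWithin 1 (Set.Iio 1)) (nhds (G t)) := by
  set l := nhdsWithin (1:ℝ) (Set.Iio 1) with hldef
  set L := G t with hLdef
  set c := t - a with hcdef
  have hc : 0 < c := by rw [hcdef]; linarith
  set φ : ℝ → ENNReal := fun τ => (‖G τ - L‖₊ : ENNReal) with hφdef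
  have hφ : Measurable φ := (hGm.sub measurable_const).enorm
  have hGLint : IntegrableOn (fun τ => G τ - L) (Set.Ioc a t) :=
    hGint.integrableOn.sub (integrableOn_const measure_Ioc_lt_top.ne)
  have hφfin : (∫⁻ τ in Set.Ioc a t, φ τ) ≠ ⊤ := hGLint.2.ne
  set K : ℝ := (∫⁻ τ in Set.Ioc a t, φ τ).toReal with hKdef
  have hKnn : 0 ≤ K := ENNReal.toReal_nonneg
  have hKeq : (∫⁻ τ in Set.Ioc a t, φ τ) = ENNReal.ofReal K := (ENNReal.ofReal_toReal hφfin).symm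
  -- kernel facts
  have hkm : ∀ α : ℝ, Measurable fun τ : ℝ => (t - τ) ^ (-α) := by intro α; fun_prop
  have hkint : ∀ α : ℝ, 0 < α → α < 1 →
      IntegrableOn (fun τ : ℝ => (t - τ) ^ (-α)) (Set.Ioc a t) := by
    intro α h0 h1
    have base : IntervalIntegrable (fun x : ℝ => x ^ (-α)) volume 0 (t - a) :=
      intervalIntegral.intervalIntegrable_rpow' (by linarith)
    have h2 := (base.comp_sub_left t).symm
    rw [sub_zero] at h2
    rwa [intervalIntegrable_iff_integrableOn_Ioc_of_le (by linarith : t - (t - a) ≤ t),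
      show t - (t - a) = a by ring] at h2
  have hnorm : ∀ α : ℝ, ∀ τ ∈ Set.Ioc a t,
      (‖(G τ - L) * (t - τ) ^ (-α)‖₊ : ENNReal) = φ τ * ENNReal.ofReal ((t - τ) ^ (-α)) := by
    intro α τ hτ
    rw [nnnorm_mul, ENNReal.coe_mul,
      ← Real.enorm_eq_ofReal (Real.rpow_nonneg (by linarith [hτ.2]) _)]
    rfl
  -- Γ facts
  have hΓ2eq : ∀ α : ℝ, α < 1 → Real.Gamma (2 - α) = (1 - α) * Real.Gamma (1 - α) := by
    intro α h1
    rw [show (2 - α : ℝ) = (1 - α) + 1 by ring,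
      Real.Gamma_add_one (by linarith : (1:ℝ) - α ≠ 0)]
  have hΓ : Tendsto (fun α : ℝ => Real.Gamma (2 - α)) l (nhds 1) := by
    have h2 : Tendsto (fun α : ℝ => 2 - α) l (nhds 1) := by
      have h3 : Tendsto (fun α : ℝ => 2 - α) (nhds 1) (nhds (2 - 1)) :=
        (continuous_const.sub continuous_id).tendsto 1
      norm_num at h3
      exact h3.mono_left nhdsWithin_le_nhds
    have hcont : ContinuousAt Real.Gamma 1 := by
      refine (Real.differentiableAt_Gamma fun m => ?_).continuousAt
      have h0 : (0:ℝ) ≤ m := Nat.cast_nonneg m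
      intro hh
      linarith
    have := hcont.tendsto.comp h2
    rwa [Real.Gamma_one] at this
  have hmem : Set.Ioo (0:ℝ) 1 ∈ l := Ioo_mem_nhdsLT_of_mem (by constructor <;> norm_num)
  -- generic rpow limit
  have hrpow : ∀ d : ℝ, 0 < d → ∀ e : ℝ, Tendsto (fun α : ℝ => d ^ (e - α)) l
      (nhds (d ^ (e - 1))) := by
    intro d hd e
    have hfun : ∀ α : ℝ, d ^ (e - α) = Real.exp (Real.log d * (e - α)) := fun α =>
      Real.rpow_def_of_pos hd _
    have hcm : Continuous fun α : ℝ => Real.log d * (e - α) := continuous_const.mul (continuous_const.sub continuous_id)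
    have h1 : Tendsto (fun α : ℝ => Real.log d * (e - α)) l (nhds (Real.log d * (e - 1))) :=
      (hcm.tendsto 1).mono_left nhdsWithin_le_nhds
    have := (Real.continuous_exp.tendsto _).comp h1
    rw [← Real.rpow_def_of_pos hd] at this
    exact Tendsto.congr (fun α => (hfun α).symm) this
  -- combined lintegral bound
  have hbound : ∀ ε' : ℝ, 0 < ε' → ∃ δ : ℝ, 0 < δ ∧ δ ≤ c ∧ ∀ α : ℝ, 0 < α → α < 1 →
      ∫⁻ τ in Set.Ioc a t, φ τ * ENNReal.ofReal ((t - τ) ^ (-α)) ≤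
        ENNReal.ofReal (δ ^ (-α) * (K + ε' * δ) + ε' * α * (δ ^ (1 - α) / (1 - α))) := by
    intro ε' hε'
    obtain ⟨δ₁, hδ₁, hν⟩ := hleb ε' hε'
    refine ⟨min δ₁ c, lt_min hδ₁ hc, min_le_right _ _, fun α h0 h1 => ?_⟩
    have hδ0 : 0 < min δ₁ c := lt_min hδ₁ hc
    have h := err_bound hφ h0 h1 hδ0 (min_le_right δ₁ c)
      hε'.le (fun u hu huδ => hν u hu (huδ.trans (min_le_left _ _)))
    rw [hKeq] at h
    refine h.trans (le_of_eq ?_)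
    rw [← ENNReal.ofReal_add hKnn (by positivity), ← ENNReal.ofReal_mul
      (Real.rpow_nonneg hδ0.le _), ← ENNReal.ofReal_add (by positivity) (mul_nonneg
      (mul_nonneg hε'.le h0.le) (div_nonneg (Real.rpow_nonneg hδ0.le _) (by linarith)))]
  -- integrability of the error integrand
  have herrInt : ∀ α : ℝ, 0 < α → α < 1 →
      IntegrableOn (fun τ => (G τ - L) * (t - τ) ^ (-α)) (Set.Ioc a t) := by
    intro α h0 h1
    obtain ⟨δ, hδ0, hδc, hb⟩ := hbound 1 one_pos
    refine ⟨((hGm.sub measurable_const).mul (hkm α)).aestronglyMeasurable, ?_⟩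
    rw [hasFiniteIntegral_def]
    calc ∫⁻ τ in Set.Ioc a t, (‖(G τ - L) * (t - τ) ^ (-α)‖₊ : ENNReal)
        = ∫⁻ τ in Set.Ioc a t, φ τ * ENNReal.ofReal ((t - τ) ^ (-α)) :=
          setLIntegral_congr_fun measurableSet_Ioc (hnorm α)
      _ ≤ _ := hb α h0 h1
      _ < ⊤ := ENNReal.ofReal_lt_top
  -- norm bound on the error integral
  have herrAbs : ∀ ε' : ℝ, 0 < ε' → ∃ δ : ℝ, 0 < δ ∧ δ ≤ c ∧ ∀ α : ℝ, 0 < α → α < 1 →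
      ‖∫ τ in Set.Ioc a t, (G τ - L) * (t - τ) ^ (-α)‖ ≤
        δ ^ (-α) * (K + ε' * δ) + ε' * α * (δ ^ (1 - α) / (1 - α)) := by
    intro ε' hε'
    obtain ⟨δ, hδ0, hδc, hb⟩ := hbound ε' hε'
    refine ⟨δ, hδ0, hδc, fun α h0 h1 => ?_⟩
    have hb' := hb α h0 h1
    have h2 : ‖∫ τ in Set.Ioc a t, (G τ - L) * (t - τ) ^ (-α)‖ ≤
        (∫⁻ τ in Set.Ioc a t, (‖(G τ - L) * (t - τ) ^ (-α)‖₊ : ENNReal)).toReal := by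
      have h3 := norm_integral_le_lintegral_norm (μ := volume.restrict (Set.Ioc a t))
        (f := fun τ => (G τ - L) * (t - τ) ^ (-α))
      have h5 : ∫⁻ τ in Set.Ioc a t, ENNReal.ofReal ‖(G τ - L) * (t - τ) ^ (-α)‖ =
          ∫⁻ τ in Set.Ioc a t, (‖(G τ - L) * (t - τ) ^ (-α)‖₊ : ENNReal) :=
        lintegral_congr fun τ => ofReal_norm_eq_enorm _
      rw [← h5]
      exact h3
    refine h2.trans ?_
    rw [setLIntegral_congr_fun measurableSet_Ioc (hnorm α)]
    have h4 := ENNReal.toReal_mono ENNReal.ofReal_ne_top hb'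
    rwa [ENNReal.toReal_ofReal (add_nonneg
      (mul_nonneg (Real.rpow_nonneg hδ0.le _) (add_nonneg hKnn (mul_nonneg hε'.le hδ0.le)))
      (mul_nonneg (mul_nonneg hε'.le h0.le)
        (div_nonneg (Real.rpow_nonneg hδ0.le _) (by linarith))))] at h4
  -- decomposition
  have hdecomp : ∀ α : ℝ, 0 < α → α < 1 → caputoD a α G t =
      L * c ^ (1 - α) / Real.Gamma (2 - α) +
        (1 / Real.Gamma (1 - α)) * ∫ τ in Set.Ioc a t, (G τ - L) * (t - τ) ^ (-α) := by
    intro α h0 h1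
    have hΓpos : 0 < Real.Gamma (1 - α) := Real.Gamma_pos_of_pos (by linarith)
    have hLk : ∫ τ in Set.Ioc a t, L * (t - τ) ^ (-α) = L * (c ^ (1 - α) / (1 - α)) := by
      rw [← intervalIntegral.integral_of_le hta.le, intervalIntegral.integral_const_mul]
      congr 1
      rw [intervalIntegral.integral_comp_sub_left (fun x : ℝ => x ^ (-α)) t, sub_self,
        integral_rpow (Or.inl (by linarith : (-1:ℝ) < -α)),
        Real.zero_rpow (by intro h; rw [show (-α + 1 : ℝ) = 1 - α by ring] at h; linarith),
        show (-α + 1 : ℝ) = 1 - α by ring]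
      rw [hcdef]
      ring
    have hsplit : ∫ τ in Set.Ioc a t, G τ * (t - τ) ^ (-α) =
        (∫ τ in Set.Ioc a t, (G τ - L) * (t - τ) ^ (-α)) + L * (c ^ (1 - α) / (1 - α)) := by
      have hptw : ∫ τ in Set.Ioc a t, G τ * (t - τ) ^ (-α) =
          ∫ τ in Set.Ioc a t, ((G τ - L) * (t - τ) ^ (-α) + L * (t - τ) ^ (-α)) := by
        congr 1
        ext τ
        ring
      rw [hptw, integral_add (herrInt α h0 h1) ((hkint α h0 h1).const_mul L), hLk]
    have hΓ2 := hΓ2eq α h1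
    simp only [caputoD]
    rw [intervalIntegral.integral_of_le hta.le, hsplit, mul_add, add_comm]
    congr 1
    rw [hΓ2]
    field_simp
  -- limit of the main term
  have hmain : Tendsto (fun α : ℝ => L * c ^ (1 - α) / Real.Gamma (2 - α)) l (nhds L) := by
    have hpow := hrpow c hc 1
    rw [sub_self, Real.rpow_zero] at hpow
    have hmul : Tendsto (fun α : ℝ => L * c ^ (1 - α)) l (nhds (L * 1)) := hpow.const_mul L
    have := hmul.div hΓ one_ne_zero
    simpa [Pi.div_def] using this
  -- limit of the error term
  have herr : Tendsto (fun α : ℝ => (1 / Real.Gamma (1 - α)) *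
      ∫ τ in Set.Ioc a t, (G τ - L) * (t - τ) ^ (-α)) l (nhds 0) := by
    rw [NormedAddCommGroup.tendsto_nhds_zero]
    intro ε hε
    obtain ⟨δ, hδ0, hδc, hEb⟩ := herrAbs (ε / 4) (by linarith)
    set B : ℝ → ℝ := fun α => (1 - α) * δ ^ (-α) * (K + ε / 4 * δ) / Real.Gamma (2 - α) +
        ε / 4 * α * δ ^ (1 - α) / Real.Gamma (2 - α) with hBdef
    have hδα : Tendsto (fun α : ℝ => δ ^ (-α)) l (nhds (δ ^ (-1:ℝ))) := by
      have := hrpow δ hδ0 0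
      simpa [zero_sub] using this
    have hδ1α : Tendsto (fun α : ℝ => δ ^ (1 - α)) l (nhds 1) := by
      have := hrpow δ hδ0 1
      rwa [sub_self, Real.rpow_zero] at this
    have h1mα : Tendsto (fun α : ℝ => (1:ℝ) - α) l (nhds 0) := by
      have h3 : Tendsto (fun α : ℝ => (1:ℝ) - α) (nhds 1) (nhds (1 - 1)) :=
        (continuous_const.sub continuous_id).tendsto 1
      rw [sub_self] at h3
      exact h3.mono_left nhdsWithin_le_nhds
    have hidα : Tendsto (fun α : ℝ => α) l (nhds 1) := tendsto_id.mono_left nhdsWithin_le_nhds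
    have hBlim : Tendsto B l (nhds (ε / 4)) := by
      have hB1 : Tendsto (fun α : ℝ => (1 - α) * δ ^ (-α) * (K + ε / 4 * δ) /
          Real.Gamma (2 - α)) l (nhds 0) := by
        have hmul : Tendsto (fun α : ℝ => (1 - α) * δ ^ (-α) * (K + ε / 4 * δ)) l
            (nhds (0 * δ ^ (-1:ℝ) * (K + ε / 4 * δ))) :=
          (h1mα.mul hδα).mul (tendsto_const_nhds (x := K + ε / 4 * δ))
        have := hmul.div hΓ one_ne_zero
        simpa [Pi.div_def] using this
      have hB2 : Tendsto (fun α : ℝ => ε / 4 * α * δ ^ (1 - α) / Real.Gamma (2 - α)) l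
          (nhds (ε / 4)) := by
        have hmul : Tendsto (fun α : ℝ => ε / 4 * α * δ ^ (1 - α)) l
            (nhds (ε / 4 * 1 * 1)) :=
          ((tendsto_const_nhds (x := ε / 4)).mul hidα).mul hδ1α
        have := hmul.div hΓ one_ne_zero
        simpa [Pi.div_def] using this
      have := hB1.add hB2
      rwa [zero_add] at this
    have hBev : ∀ᶠ α in l, B α < ε := hBlim.eventually_lt_const (by linarith)
    filter_upwards [hBev, hmem] with α hBα hα01
    obtain ⟨h0, h1⟩ := hα01
    have hΓpos : 0 < Real.Gamma (1 - α) := Real.Gamma_pos_of_pos (by linarith)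
    have hbnd := hEb α h0 h1
    calc ‖(1 / Real.Gamma (1 - α)) * ∫ τ in Set.Ioc a t, (G τ - L) * (t - τ) ^ (-α)‖
        = (1 / Real.Gamma (1 - α)) * ‖∫ τ in Set.Ioc a t, (G τ - L) * (t - τ) ^ (-α)‖ := by
          rw [norm_mul, Real.norm_of_nonneg (by positivity)]
      _ ≤ (1 / Real.Gamma (1 - α)) *
          (δ ^ (-α) * (K + ε / 4 * δ) + ε / 4 * α * (δ ^ (1 - α) / (1 - α))) :=
          mul_le_mul_of_nonneg_left hbnd (by positivity)
      _ = B α := by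
          have h1α : (1:ℝ) - α ≠ 0 := by intro h; linarith [h]
          simp only [hBdef, hΓ2eq α h1]
          field_simp
      _ < ε := hBα
  -- conclusion
  have hsum := hmain.add herr
  rw [add_zero] at hsum
  refine Tendsto.congr' ?_ hsum
  filter_upwards [hmem] with α hα01
  exact (hdecomp α hα01.1 hα01.2).symm

/-- For `f ∈ W^{1,1}(a,b)`, `ᶜ_aDᵅf(t) → f'(t)` as `α → 1⁻`, a.e. in `(a,b)`. -/
theorem caputo_ae_tendsto (a b : ℝ) (hab : a < b) (f f' : ℝ → ℝ)
    (hf' : IntegrableOn f' (Set.Ioo a b))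
    (hf : ∀ t ∈ Set.Icc a b, f t = f a + ∫ τ in a..t, f' τ) :
    ∀ᵐ t ∂(volume.restrict (Set.Ioo a b)),
      Tendsto (fun α => caputoD a α f' t) (nhdsWithin 1 (Set.Iio 1)) (nhds (f' t)) := by
  have hmeas := hf'.aestronglyMeasurable
  set g : ℝ → ℝ := hmeas.mk f' with hgdef
  have hgm : StronglyMeasurable g := hmeas.stronglyMeasurable_mk
  have hae : f' =ᵐ[volume.restrict (Set.Ioo a b)] g := hmeas.ae_eq_mk
  set G : ℝ → ℝ := (Set.Ioo a b).indicator g with hGdef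
  have hGm : Measurable G := hgm.measurable.indicator measurableSet_Ioo
  have hGint : Integrable G := by
    rw [integrable_indicator_iff measurableSet_Ioo]
    exact hf'.congr hae
  have hGae : ∀ᵐ τ ∂(volume.restrict (Set.Ioo a b)), f' τ = G τ := by
    filter_upwards [hae, ae_restrict_mem measurableSet_Ioo] with τ h1 h2
    rw [h1, hGdef, Set.indicator_of_mem h2]
  filter_upwards [ae_restrict_of_ae (lebesgue_pts G hGint), hGae,
    ae_restrict_mem measurableSet_Ioo] with t hleb hGt ht
  have hta : a < t := ht.1
  have hIocsub : Set.Ioc a t ⊆ Set.Ioo a b := fun τ hτ => ⟨hτ.1, lt_of_le_of_lt hτ.2 ht.2⟩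
  have hcongr : ∀ α : ℝ, caputoD a α f' t = caputoD a α G t := by
    intro α
    simp only [caputoD]
    congr 1
    rw [intervalIntegral.integral_of_le hta.le, intervalIntegral.integral_of_le hta.le]
    refine integral_congr_ae ?_
    have h2 : ∀ᵐ τ ∂(volume.restrict (Set.Ioc a t)), f' τ = G τ :=
      ae_restrict_of_ae_restrict_of_subset hIocsub hGae
    filter_upwards [h2] with τ hτ
    rw [hτ]
  rw [hGt]
  exact Tendsto.congr (fun α => (hcongr α).symm) (pointwise_tendsto hta G hGm hGint hleb)
end

section
/- Let -∞ < a < b < ∞ and let f belong to W^{1,1}(a,b). Then lim_{α→1⁻} ∫_a^b |ᶜᶠ_aDᵅf(t) − f'(t)| dt = 0, i.e. the Caputo–Fabrizio fractional derivative of order α converges to the ordinary derivative in the L¹(a,b) norm as α increases to 1. -/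
open MeasureTheory Filter Set

open scoped Convolution

namespace CFAux

/-- The Caputo–Fabrizio kernel. -/
noncomputable def K (α s : ℝ) : ℝ := (1 / (1 - α)) * Real.exp (-(α / (1 - α)) * s)

lemma K_nonneg (α s : ℝ) (h1 : α < 1) : 0 ≤ K α s := by
  have : (0:ℝ) < 1 - α := by linarith
  exact mul_nonneg (by positivity) (Real.exp_nonneg _)

lemma K_cont (α : ℝ) : Continuous (K α) := by
  unfold K; fun_prop

lemma intExp {μ : ℝ} (hμ : μ ≠ 0) (c d : ℝ) :
    ∫ s in c..d, Real.exp (-μ * s) = (Real.exp (-μ*c) - Real.exp (-μ*d))/μ := by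
  have h := intervalIntegral.integral_comp_mul_left (a := c) (b := d) Real.exp
    (neg_ne_zero.2 hμ)
  rw [h, integral_exp, smul_eq_mul, eq_div_iff hμ, inv_neg, neg_mul, mul_comm μ⁻¹,
    neg_mul, mul_assoc, inv_mul_cancel₀ hμ, mul_one, neg_sub]

lemma intK {α : ℝ} (h0 : 0 < α) (h1 : α < 1) (c d : ℝ) :
    ∫ s in c..d, K α s
      = (1/α) * (Real.exp (-(α/(1-α))*c) - Real.exp (-(α/(1-α))*d)) := by
  have h1' : (0:ℝ) < 1 - α := by linarith
  have hμ : α/(1-α) ≠ 0 := by positivity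
  unfold K
  rw [intervalIntegral.integral_const_mul, intExp hμ]
  rw [div_eq_mul_inv (Real.exp _ - Real.exp _)]
  rw [show (α/(1-α))⁻¹ = (1-α)/α by rw [inv_div]]
  field_simp

lemma intK_sub_left {α : ℝ} (h0 : 0 < α) (h1 : α < 1) (t c d : ℝ) :
    ∫ τ in c..d, K α (t - τ)
      = (1/α) * (Real.exp (-(α/(1-α))*(t-d)) - Real.exp (-(α/(1-α))*(t-c))) := by
  rw [intervalIntegral.integral_comp_sub_left (K α) t, intK h0 h1]

lemma tendsto_mu : Tendsto (fun α : ℝ => α/(1-α)) (nhdsWithin 1 (Set.Iio 1)) atTop := by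
  have h1 : Tendsto (fun α : ℝ => 1 - α) (nhdsWithin 1 (Set.Iio 1)) (nhdsWithin 0 (Set.Ioi 0)) := by
    rw [tendsto_nhdsWithin_iff]
    constructor
    · have h : Tendsto (fun α : ℝ => 1 - α) (nhds 1) (nhds (1 - 1)) :=
        tendsto_const_nhds.sub tendsto_id
      simpa using h.mono_left nhdsWithin_le_nhds
    · filter_upwards [self_mem_nhdsWithin] with α (hα : α < 1)
      simpa using hα
  have h2 : Tendsto (fun α : ℝ => (1 - α)⁻¹) (nhdsWithin 1 (Set.Iio 1)) atTop :=
    tendsto_inv_nhdsGT_zero.comp h1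
  have h3 : Tendsto (fun α : ℝ => α) (nhdsWithin 1 (Set.Iio 1)) (nhds 1) :=
    tendsto_id.mono_left nhdsWithin_le_nhds
  have := h3.pos_mul_atTop one_pos h2
  simpa [div_eq_mul_inv] using this

lemma tendsto_exp_mu {c : ℝ} (hc : 0 < c) :
    Tendsto (fun α : ℝ => Real.exp (-(α/(1-α))*c)) (nhdsWithin 1 (Set.Iio 1)) (nhds 0) := by
  have h : Tendsto (fun α : ℝ => -(α/(1-α))*c) (nhdsWithin 1 (Set.Iio 1)) atBot := by
    have h := tendsto_mu.atTop_mul_const hc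
    have := tendsto_neg_atTop_atBot.comp h
    simpa [neg_mul, Function.comp_def] using this
  exact Real.tendsto_exp_atBot.comp h

lemma tendsto_inv_alpha : Tendsto (fun α : ℝ => 1/α) (nhdsWithin 1 (Set.Iio 1)) (nhds 1) := by
  have : Tendsto (fun α : ℝ => 1/α) (nhds (1:ℝ)) (nhds 1) := by
    have := (continuousAt_inv₀ (one_ne_zero : (1:ℝ) ≠ 0)).tendsto
    simpa [one_div] using this
  exact this.mono_left nhdsWithin_le_nhds

end CFAux

namespace CFAux

lemma K_cont_t (α t : ℝ) : Continuous (fun τ => K α (t - τ)) :=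
  (K_cont α).comp (continuous_const.sub continuous_id)

lemma cont_conv {φ : ℝ → ℝ} (hφ : Continuous φ) (a α : ℝ) :
    Continuous (fun t => ∫ τ in a..t, φ τ * K α (t - τ)) := by
  have key : ∀ t, (∫ τ in a..t, φ τ * K α (t - τ))
      = ((1/(1-α)) * Real.exp (-(α/(1-α)) * t))
        * ∫ τ in a..t, φ τ * Real.exp ((α/(1-α)) * τ) := by
    intro t
    rw [← intervalIntegral.integral_const_mul]
    refine intervalIntegral.integral_congr fun τ _ => ?_
    have he : Real.exp (-(α/(1-α)) * (t - τ))
        = Real.exp (-(α/(1-α)) * t) * Real.exp ((α/(1-α)) * τ) := by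
      rw [← Real.exp_add]; ring_nf
    unfold K
    rw [he]; ring
  rw [show (fun t => ∫ τ in a..t, φ τ * K α (t - τ))
      = fun t => ((1/(1-α)) * Real.exp (-(α/(1-α)) * t))
        * ∫ τ in a..t, φ τ * Real.exp ((α/(1-α)) * τ) from funext key]
  refine Continuous.mul (by fun_prop) ?_
  exact intervalIntegral.continuous_primitive
    (fun c d => (hφ.mul (by fun_prop)).intervalIntegrable c d) a

set_option maxHeartbeats 2000000 in
lemma tendsto_pointwise {φ : ℝ → ℝ} (hφ : Continuous φ) {M : ℝ}
    (hM : ∀ x, ‖φ x‖ ≤ M) {a t : ℝ} (hat : a < t) :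
    Tendsto (fun α => ∫ τ in a..t, φ τ * K α (t - τ)) (nhdsWithin 1 (Set.Iio 1))
      (nhds (φ t)) := by
  have hM0 : 0 ≤ M := le_trans (norm_nonneg _) (hM 0)
  rw [Metric.tendsto_nhds]
  intro ε hε
  obtain ⟨δ0, hδ0, hδ0'⟩ := Metric.continuousAt_iff.1 hφ.continuousAt (ε/4) (by linarith)
  set δ := min (δ0/2) ((t-a)/2) with hδdef
  have hδpos : 0 < δ := lt_min (by linarith) (by linarith)
  have hδlt : δ < δ0 := lt_of_le_of_lt (min_le_left _ _) (by linarith)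
  have hδta : a ≤ t - δ := by
    have : δ ≤ (t-a)/2 := min_le_right _ _
    linarith
  have ev1 : ∀ᶠ α in nhdsWithin 1 (Set.Iio 1), α ∈ Set.Ioo (1/2 : ℝ) 1 :=
    Ioo_mem_nhdsLT_of_mem (by norm_num)
  have ev2 : ∀ᶠ α in nhdsWithin 1 (Set.Iio 1),
      (2*M) * Real.exp (-(α/(1-α))*δ) < ε/4 := by
    have h := (tendsto_exp_mu hδpos).const_mul (2*M)
    rw [mul_zero] at h
    exact h.eventually_lt_const (by linarith)
  have ev3 : ∀ᶠ α in nhdsWithin 1 (Set.Iio 1),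
      M * |(1/α) * (1 - Real.exp (-(α/(1-α))*δ)) - 1| < ε/4 := by
    have hG : Tendsto (fun α : ℝ => (1/α) * (1 - Real.exp (-(α/(1-α))*δ)))
        (nhdsWithin 1 (Set.Iio 1)) (nhds 1) := by
      have hsub : Tendsto (fun α : ℝ => 1 - Real.exp (-(α/(1-α))*δ))
          (nhdsWithin 1 (Set.Iio 1)) (nhds (1 - 0)) :=
        tendsto_const_nhds.sub (tendsto_exp_mu hδpos)
      have := tendsto_inv_alpha.mul hsub
      simpa using this
    have h := ((hG.sub_const 1).abs).const_mul M
    simp only [sub_self, abs_zero, mul_zero] at h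
    exact h.eventually_lt_const (by linarith)
  filter_upwards [ev1, ev2, ev3] with α hα h2 h3
  have h0 : (0:ℝ) < α := lt_trans (by norm_num) hα.1
  have h1 : α < 1 := hα.2
  have h1' : (0:ℝ) < 1 - α := by linarith
  have hμpos : 0 < α/(1-α) := by positivity
  have hKnn : ∀ s, 0 ≤ K α s := fun s => K_nonneg α s h1
  have hinva : 1/α ≤ 2 := by
    rw [div_le_iff₀ h0]; linarith [hα.1]
  have hinva0 : 0 < 1/α := by positivity
  -- interval integrability
  have hii : ∀ (ψ : ℝ → ℝ) (hψ : Continuous ψ) (c d : ℝ),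
      IntervalIntegrable (fun τ => ψ τ * K α (t - τ)) volume c d :=
    fun ψ hψ c d => (hψ.mul (K_cont_t α t)).intervalIntegrable c d
  set I1 := ∫ τ in a..(t-δ), φ τ * K α (t-τ) with hI1
  set I2 := ∫ τ in (t-δ)..t, (φ τ - φ t) * K α (t-τ) with hI2
  set I3 := ∫ τ in (t-δ)..t, K α (t-τ) with hI3
  have hsplit : (∫ τ in a..t, φ τ * K α (t - τ)) = I1 + (I2 + φ t * I3) := by
    rw [hI1, hI2, hI3, ← intervalIntegral.integral_const_mul,
      ← intervalIntegral.integral_add (show IntervalIntegrable (fun τ => (φ τ - φ t) * K α (t - τ)) volume (t-δ) t from hii _ (hφ.sub continuous_const) _ _)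
        (hii _ continuous_const _ _),
      show (∫ τ in (t-δ)..t, ((φ τ - φ t) * K α (t-τ) + φ t * K α (t-τ)))
          = ∫ τ in (t-δ)..t, φ τ * K α (t-τ) from
        intervalIntegral.integral_congr (fun τ _ => by ring)]
    exact (intervalIntegral.integral_add_adjacent_intervals
      (hii _ hφ _ _) (hii _ hφ _ _)).symm
  -- I3 value and bounds
  have hI3v : I3 = (1/α) * (1 - Real.exp (-(α/(1-α))*δ)) := by
    rw [hI3, intK_sub_left h0 h1]
    congr 2
    · rw [show t - t = 0 by ring, mul_zero, Real.exp_zero]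
    · rw [show t - (t - δ) = δ by ring]
  have hexpδ1 : Real.exp (-(α/(1-α))*δ) ≤ 1 := by
    rw [Real.exp_le_one_iff]
    nlinarith
  have hexpδ0 : 0 < Real.exp (-(α/(1-α))*δ) := Real.exp_pos _
  have hI3nn : 0 ≤ I3 := by rw [hI3v]; nlinarith
  have hI3le : I3 ≤ 2 := by
    rw [hI3v]
    calc (1/α) * (1 - Real.exp (-(α/(1-α))*δ)) ≤ (1/α) * 1 := by nlinarith
    _ ≤ 2 := by linarith
  -- bound I1
  have hb1 : ‖I1‖ < ε/4 := by
    have step1 : ‖I1‖ ≤ ∫ τ in a..(t-δ), ‖φ τ * K α (t-τ)‖ :=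
      intervalIntegral.norm_integral_le_integral_norm hδta
    have step2 : (∫ τ in a..(t-δ), ‖φ τ * K α (t-τ)‖)
        ≤ ∫ τ in a..(t-δ), M * K α (t-τ) := by
      refine intervalIntegral.integral_mono_on hδta
        ((hφ.mul (K_cont_t α t)).norm.intervalIntegrable _ _)
        ((continuous_const.mul (K_cont_t α t)).intervalIntegrable _ _)
        (fun τ _ => ?_)
      rw [norm_mul, Real.norm_eq_abs (K α (t - τ)), abs_of_nonneg (hKnn _)]
      exact mul_le_mul_of_nonneg_right (hM τ) (hKnn _)
    have step3 : (∫ τ in a..(t-δ), M * K α (t-τ))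
        = M * ((1/α) * (Real.exp (-(α/(1-α))*δ) - Real.exp (-(α/(1-α))*(t-a)))) := by
      rw [intervalIntegral.integral_const_mul, intK_sub_left h0 h1]
      congr 3
      rw [show t - (t - δ) = δ by ring]
    have hexpta : 0 < Real.exp (-(α/(1-α))*(t-a)) := Real.exp_pos _
    have step4 : M * ((1/α) * (Real.exp (-(α/(1-α))*δ) - Real.exp (-(α/(1-α))*(t-a))))
        ≤ (2*M) * Real.exp (-(α/(1-α))*δ) := by
      have e1 : (1/α) * (Real.exp (-(α/(1-α))*δ) - Real.exp (-(α/(1-α))*(t-a)))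
          ≤ 2 * Real.exp (-(α/(1-α))*δ) := by
        nlinarith [mul_pos hinva0 hexpta,
          mul_nonneg (by linarith : (0:ℝ) ≤ 2 - 1/α) hexpδ0.le]
      calc M * ((1/α) * (Real.exp (-(α/(1-α))*δ) - Real.exp (-(α/(1-α))*(t-a))))
          ≤ M * (2 * Real.exp (-(α/(1-α))*δ)) := mul_le_mul_of_nonneg_left e1 hM0
      _ = (2*M) * Real.exp (-(α/(1-α))*δ) := by ring
    calc ‖I1‖ ≤ _ := step1
    _ ≤ _ := step2
    _ = _ := step3
    _ ≤ _ := step4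
    _ < ε/4 := h2
  -- bound I2
  have hb2 : ‖I2‖ ≤ ε/2 := by
    have step1 : ‖I2‖ ≤ ∫ τ in (t-δ)..t, ‖(φ τ - φ t) * K α (t-τ)‖ :=
      intervalIntegral.norm_integral_le_integral_norm (by linarith)
    have step2 : (∫ τ in (t-δ)..t, ‖(φ τ - φ t) * K α (t-τ)‖)
        ≤ ∫ τ in (t-δ)..t, (ε/4) * K α (t-τ) := by
      refine intervalIntegral.integral_mono_on (by linarith)
        (((hφ.sub continuous_const).mul (K_cont_t α t)).norm.intervalIntegrable _ _)
        ((continuous_const.mul (K_cont_t α t)).intervalIntegrable _ _)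
        (fun τ hτ => ?_)
      rw [norm_mul, Real.norm_eq_abs (K α (t - τ)), abs_of_nonneg (hKnn _)]
      refine mul_le_mul_of_nonneg_right ?_ (hKnn _)
      have hτ' : dist τ t < δ0 := by
        rw [Real.dist_eq, abs_lt]
        rw [Set.mem_Icc] at hτ
        constructor <;> [linarith [hτ.1]; linarith [hτ.2]]
      exact le_of_lt (hδ0' hτ')
    have step3 : (∫ τ in (t-δ)..t, (ε/4) * K α (t-τ)) = (ε/4) * I3 := by
      rw [hI3, intervalIntegral.integral_const_mul]
    calc ‖I2‖ ≤ _ := step1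
    _ ≤ _ := step2
    _ = (ε/4) * I3 := step3
    _ ≤ (ε/4) * 2 := mul_le_mul_of_nonneg_left hI3le (by linarith)
    _ = ε/2 := by ring
  -- conclude
  rw [hsplit, Real.dist_eq]
  have hb3 : |φ t * I3 - φ t| < ε/4 := by
    have : |φ t * I3 - φ t| = |φ t| * |I3 - 1| := by
      rw [← abs_mul]; congr 1; ring
    rw [this, hI3v]
    calc |φ t| * |(1/α) * (1 - Real.exp (-(α/(1-α))*δ)) - 1|
        ≤ M * |(1/α) * (1 - Real.exp (-(α/(1-α))*δ)) - 1| := by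
          have := hM t
          rw [Real.norm_eq_abs] at this
          exact mul_le_mul_of_nonneg_right this (abs_nonneg _)
    _ < ε/4 := h3
  have habs : |I1 + (I2 + φ t * I3) - φ t| ≤ |I1| + |I2| + |φ t * I3 - φ t| := by
    have h' := abs_add_le (I1 + I2) (φ t * I3 - φ t)
    have h'' := abs_add_le I1 I2
    calc |I1 + (I2 + φ t * I3) - φ t| = |(I1 + I2) + (φ t * I3 - φ t)| := by ring_nf
    _ ≤ |I1 + I2| + |φ t * I3 - φ t| := h'
    _ ≤ |I1| + |I2| + |φ t * I3 - φ t| := by linarith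
  rw [Real.norm_eq_abs] at hb1 hb2
  linarith

end CFAux

namespace CFAux

lemma K_le {α : ℝ} (h0 : 0 ≤ α) (h1 : α < 1) {s : ℝ} (hs : 0 ≤ s) : K α s ≤ 1/(1-α) := by
  have h1' : (0:ℝ) < 1 - α := by linarith
  unfold K
  calc (1/(1-α)) * Real.exp (-(α/(1-α)) * s) ≤ (1/(1-α)) * 1 := by
        refine mul_le_mul_of_nonneg_left ?_ (by positivity)
        rw [Real.exp_le_one_iff]
        have := mul_nonneg (div_nonneg h0 h1'.le) hs
        linarith
  _ = 1/(1-α) := mul_one _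

lemma conv_norm_bound {φ : ℝ → ℝ} (hφ : Continuous φ) {M : ℝ}
    (hM : ∀ x, ‖φ x‖ ≤ M) {α a t : ℝ} (h0 : 0 < α) (h1 : α < 1) (hat : a ≤ t) :
    ‖∫ τ in a..t, φ τ * K α (t - τ)‖ ≤ M * (1/α) := by
  have hM0 : 0 ≤ M := le_trans (norm_nonneg _) (hM 0)
  have hKnn : ∀ s, 0 ≤ K α s := fun s => K_nonneg α s h1
  have step1 : ‖∫ τ in a..t, φ τ * K α (t-τ)‖ ≤ ∫ τ in a..t, ‖φ τ * K α (t-τ)‖ :=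
    intervalIntegral.norm_integral_le_integral_norm hat
  have step2 : (∫ τ in a..t, ‖φ τ * K α (t-τ)‖) ≤ ∫ τ in a..t, M * K α (t-τ) := by
    refine intervalIntegral.integral_mono_on hat
      ((hφ.mul (K_cont_t α t)).norm.intervalIntegrable _ _)
      ((continuous_const.mul (K_cont_t α t)).intervalIntegrable _ _) (fun τ _ => ?_)
    rw [norm_mul, Real.norm_eq_abs (K α (t - τ)), abs_of_nonneg (hKnn _)]
    exact mul_le_mul_of_nonneg_right (hM τ) (hKnn _)
  have step3 : (∫ τ in a..t, M * K α (t-τ))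
      = M * ((1/α) * (Real.exp (-(α/(1-α))*(t-t)) - Real.exp (-(α/(1-α))*(t-a)))) := by
    rw [intervalIntegral.integral_const_mul, intK_sub_left h0 h1]
  have hE1 : Real.exp (-(α/(1-α))*(t-t)) = 1 := by
    rw [show t - t = 0 by ring, mul_zero, Real.exp_zero]
  have hE2 : 0 < Real.exp (-(α/(1-α))*(t-a)) := Real.exp_pos _
  have hinva0 : (0:ℝ) < 1/α := by positivity
  calc ‖∫ τ in a..t, φ τ * K α (t-τ)‖ ≤ _ := step1
  _ ≤ _ := step2
  _ = _ := step3
  _ ≤ M * (1/α) := by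
      rw [hE1]
      nlinarith [mul_nonneg hM0 (mul_pos hinva0 hE2).le]

end CFAux


set_option maxHeartbeats 2000000 in
/-- For `f ∈ W^{1,1}(a,b)`, `‖ᶜᶠ_aDᵅf - f'‖_{L¹(a,b)} → 0` as `α → 1⁻`. -/
theorem cf_L1_tendsto (a b : ℝ) (hab : a < b) (f f' : ℝ → ℝ)
    (hf' : IntegrableOn f' (Set.Ioo a b))
    (hf : ∀ t ∈ Set.Icc a b, f t = f a + ∫ τ in a..t, f' τ) :
    Tendsto (fun α => ∫ t in Set.Ioo a b, |cfD a α f' t - f' t|)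
      (nhdsWithin 1 (Set.Iio 1)) (nhds 0) := by
  rw [Metric.tendsto_nhds]
  intro ε hε
  set η := ε/5 with hηdef
  have hηpos : 0 < η := by rw [hηdef]; positivity
  -- approximation by a continuous compactly supported function
  set g : ℝ → ℝ := (Set.Ioo a b).indicator f' with hgdef
  have hgint : Integrable g := by
    rw [hgdef, integrable_indicator_iff measurableSet_Ioo]; exact hf'
  obtain ⟨φ, φsupp, φclose, φcont, φint⟩ :=
    hgint.exists_hasCompactSupport_integral_sub_le hηpos
  obtain ⟨M, hM⟩ := φsupp.exists_bound_of_continuous φcont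
  have hM0 : 0 ≤ M := le_trans (norm_nonneg _) (hM 0)
  have hgφint : Integrable (fun x => ‖g x - φ x‖) := by
    have := (hgint.sub φint).norm
    simpa [Pi.sub_apply] using this
  -- the middle-term integral tends to 0
  have hBtend : Tendsto
      (fun α => ∫ t in Set.Ioo a b, |(∫ τ in a..t, φ τ * CFAux.K α (t - τ)) - φ t|)
      (nhdsWithin 1 (Set.Iio 1)) (nhds 0) := by
    have h0 : (∫ t in Set.Ioo a b, (0:ℝ)) = 0 := by simp
    rw [← h0]
    refine tendsto_integral_filter_of_dominated_convergence (fun _ => 2*M + M) ?_ ?_ ?_ ?_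
    · filter_upwards with α
      exact (((CFAux.cont_conv φcont a α).sub φcont).abs).aestronglyMeasurable.restrict
    · filter_upwards [Ioo_mem_nhdsLT_of_mem
        (show (1:ℝ) ∈ Set.Ioc (1/2:ℝ) 1 by constructor <;> norm_num)] with α hα
      rw [ae_restrict_iff' measurableSet_Ioo]
      filter_upwards with t ht
      have h0α : (0:ℝ) < α := lt_trans (by norm_num) hα.1
      have hΦ := CFAux.conv_norm_bound φcont hM h0α hα.2 ht.1.le
      have hinva : 1/α ≤ 2 := by
        rw [div_le_iff₀ h0α]; linarith [hα.1]
      have h1 : ‖∫ τ in a..t, φ τ * CFAux.K α (t - τ)‖ ≤ 2*M := by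
        calc ‖∫ τ in a..t, φ τ * CFAux.K α (t - τ)‖ ≤ M * (1/α) := hΦ
        _ ≤ 2*M := by nlinarith
      have h2 := hM t
      rw [Real.norm_eq_abs] at h1 h2 ⊢
      rw [abs_abs]
      calc |(∫ τ in a..t, φ τ * CFAux.K α (t - τ)) - φ t|
          ≤ |∫ τ in a..t, φ τ * CFAux.K α (t - τ)| + |φ t| := abs_sub _ _
      _ ≤ 2*M + M := add_le_add h1 h2
    · exact (MeasureTheory.integrableOn_const (C := 2*M + M) (s := Set.Ioo a b)
        (μ := volume) measure_Ioo_lt_top.ne)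
    · rw [ae_restrict_iff' measurableSet_Ioo]
      filter_upwards with t ht
      have := (CFAux.tendsto_pointwise φcont hM ht.1).sub_const (φ t)
      rw [sub_self] at this
      simpa using this.abs
  -- eventual bound on the middle term
  have hBev : ∀ᶠ α in nhdsWithin 1 (Set.Iio 1),
      (∫ t in Set.Ioo a b, |(∫ τ in a..t, φ τ * CFAux.K α (t - τ)) - φ t|) < η :=
    hBtend.eventually_lt_const hηpos
  -- the first-term data
  set f₀ : ℝ → ℝ := (Set.Ioo a b).indicator (fun τ => |f' τ - φ τ|) with hf₀def
  have hf₀int : Integrable f₀ := by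
    rw [hf₀def, integrable_indicator_iff measurableSet_Ioo]
    exact (hf'.sub φint.integrableOn).abs
  have hf₀nn : ∀ x, 0 ≤ f₀ x := fun x =>
    Set.indicator_nonneg (fun τ _ => abs_nonneg _) x
  have hIf₀ : ∫ x, f₀ x ≤ η := by
    rw [hf₀def, integral_indicator measurableSet_Ioo]
    have e1 : ∫ τ in Set.Ioo a b, |f' τ - φ τ| = ∫ τ in Set.Ioo a b, ‖g τ - φ τ‖ := by
      refine setIntegral_congr_fun measurableSet_Ioo (fun τ hτ => ?_)
      rw [hgdef, Set.indicator_of_mem hτ, Real.norm_eq_abs]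
    rw [e1]
    have hle : (∫ τ in Set.Ioo a b, ‖g τ - φ τ‖) ≤ ∫ τ, ‖g τ - φ τ‖ :=
      setIntegral_le_integral hgφint
        (Filter.Eventually.of_forall fun τ => norm_nonneg (g τ - φ τ))
    linarith [hle, φclose]
  have hIf₀nn : 0 ≤ ∫ x, f₀ x := integral_nonneg hf₀nn
  -- conclusion, eventually in α
  filter_upwards [hBev, Ioo_mem_nhdsLT_of_mem
      (show (1:ℝ) ∈ Set.Ioc (1/2:ℝ) 1 by constructor <;> norm_num)] with α hB hα
  have h0α : (0:ℝ) < α := lt_trans (by norm_num) hα.1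
  have h1α : α < 1 := hα.2
  have h1' : (0:ℝ) < 1 - α := by linarith
  have hμpos : 0 < α/(1-α) := by positivity
  have hinva : 1/α ≤ 2 := by rw [div_le_iff₀ h0α]; linarith [hα.1]
  have hinva0 : (0:ℝ) < 1/α := by positivity
  -- kernel on the half line
  set kp : ℝ → ℝ := (Set.Ici (0:ℝ)).indicator (CFAux.K α) with hkpdef
  have hkpmeas : Measurable kp := by
    rw [hkpdef]
    exact ((CFAux.K_cont α).measurable).indicator measurableSet_Ici
  have hkpnn : ∀ s, 0 ≤ kp s := fun s =>
    Set.indicator_nonneg (fun s _ => CFAux.K_nonneg α s h1α) s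
  have hkple : ∀ s, ‖kp s‖ ≤ 1/(1-α) := by
    intro s
    rw [Real.norm_eq_abs, abs_of_nonneg (hkpnn s), hkpdef]
    by_cases hs : s ∈ Set.Ici (0:ℝ)
    · rw [Set.indicator_of_mem hs]
      exact CFAux.K_le h0α.le h1α hs
    · rw [Set.indicator_of_notMem hs]
      positivity
  have hkpint : Integrable kp := by
    rw [hkpdef, integrable_indicator_iff measurableSet_Ici]
    rw [integrableOn_Ici_iff_integrableOn_Ioi]
    have hkk : IntegrableOn (fun s => (1/(1-α)) * Real.exp (-(α/(1-α)) * s)) (Set.Ioi 0) :=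
      (exp_neg_integrableOn_Ioi 0 hμpos).const_mul (1/(1-α))
    exact hkk
  have hIkp : ∫ s, kp s = 1/α := by
    rw [hkpdef, integral_indicator measurableSet_Ici, integral_Ici_eq_integral_Ioi]
    have e1 : ∫ s in Set.Ioi (0:ℝ), CFAux.K α s
        = (1/(1-α)) * ∫ s in Set.Ioi (0:ℝ), Real.exp (-(α/(1-α) * s)) := by
      rw [← integral_const_mul]
      refine setIntegral_congr_fun measurableSet_Ioi (fun s _ => ?_)
      unfold CFAux.K
      ring_nf
    rw [e1]
    have e2 : ∫ s in Set.Ioi (0:ℝ), Real.exp (-(α/(1-α) * s)) = (α/(1-α))⁻¹ * 1 := by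
      have := integral_comp_mul_left_Ioi (fun x => Real.exp (-x)) 0 hμpos
      simp only [mul_zero, smul_eq_mul] at this
      rw [this, integral_exp_neg_Ioi_zero]
    rw [e2, inv_div]
    field_simp
  -- the convolution
  set L := ContinuousLinearMap.mul ℝ ℝ with hLdef
  set A : ℝ → ℝ := f₀ ⋆[L] kp with hAdef
  have hAint : Integrable A := hf₀int.integrable_convolution L hkpint
  have hAval : ∀ x, A x = ∫ τ, f₀ τ * kp (x - τ) := by
    intro x
    rw [hAdef, convolution_def]
    simp only [hLdef, ContinuousLinearMap.mul_apply']
  have hAnn : ∀ x, 0 ≤ A x := by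
    intro x
    rw [hAval x]
    exact integral_nonneg fun τ => mul_nonneg (hf₀nn τ) (hkpnn _)
  have hIA : ∫ x, A x ≤ 2*η := by
    rw [hAdef, integral_convolution L hf₀int hkpint]
    simp only [hLdef, ContinuousLinearMap.mul_apply']
    rw [hIkp]
    calc (∫ x, f₀ x) * (1/α) ≤ η * 2 := by nlinarith
    _ = 2*η := by ring
  -- pointwise bound on Ioo a b
  have hpt : ∀ t ∈ Set.Ioo a b, |cfD a α f' t - f' t|
      ≤ A t + |(∫ τ in a..t, φ τ * CFAux.K α (t - τ)) - φ t| + |φ t - f' t| := by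
    intro t ht
    have hIocsub : Set.Ioc a t ⊆ Set.Ioo a b := fun τ hτ => ⟨hτ.1, lt_of_le_of_lt hτ.2 ht.2⟩
    -- integrability of f' * K on (a, t]
    have hKbd : ∀ᵐ τ ∂(volume.restrict (Set.Ioc a t)), ‖CFAux.K α (t - τ)‖ ≤ 1/(1-α) := by
      filter_upwards [ae_restrict_mem measurableSet_Ioc] with τ hτ
      rw [Real.norm_eq_abs, abs_of_nonneg (CFAux.K_nonneg α _ h1α)]
      exact CFAux.K_le h0α.le h1α (by linarith [hτ.2] : (0:ℝ) ≤ t - τ)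
    have hf'K : IntervalIntegrable (fun τ => f' τ * CFAux.K α (t-τ)) volume a t := by
      rw [intervalIntegrable_iff_integrableOn_Ioc_of_le ht.1.le]
      have := Integrable.bdd_mul (c := 1/(1-α)) (hf'.mono_set hIocsub)
        ((CFAux.K_cont_t α t).aestronglyMeasurable.restrict) hKbd
      exact this.congr (Filter.Eventually.of_forall fun τ => mul_comm _ _)
    have hφK : IntervalIntegrable (fun τ => φ τ * CFAux.K α (t-τ)) volume a t :=
      (φcont.mul (CFAux.K_cont_t α t)).intervalIntegrable a t
    have hcfd : cfD a α f' t = ∫ τ in a..t, f' τ * CFAux.K α (t - τ) := by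
      unfold cfD CFAux.K
      rw [← intervalIntegral.integral_const_mul]
      exact intervalIntegral.integral_congr fun τ _ => by ring
    have hsub : cfD a α f' t - (∫ τ in a..t, φ τ * CFAux.K α (t - τ))
        = ∫ τ in a..t, (f' τ - φ τ) * CFAux.K α (t - τ) := by
      rw [hcfd, ← intervalIntegral.integral_sub hf'K hφK]
      exact intervalIntegral.integral_congr fun τ _ => by ring
    -- bound the first difference by the convolution
    have hbound1 : |cfD a α f' t - (∫ τ in a..t, φ τ * CFAux.K α (t - τ))| ≤ A t := by
      rw [hsub]
      have s1 : ‖∫ τ in a..t, (f' τ - φ τ) * CFAux.K α (t - τ)‖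
          ≤ ∫ τ in a..t, ‖(f' τ - φ τ) * CFAux.K α (t - τ)‖ :=
        intervalIntegral.norm_integral_le_integral_norm ht.1.le
      have s2 : (∫ τ in a..t, ‖(f' τ - φ τ) * CFAux.K α (t - τ)‖)
          = ∫ τ in Set.Ioc a t, f₀ τ * kp (t - τ) := by
        rw [intervalIntegral.integral_of_le ht.1.le]
        refine setIntegral_congr_fun measurableSet_Ioc (fun τ hτ => ?_)
        rw [norm_mul, Real.norm_eq_abs (CFAux.K α (t - τ)),
          abs_of_nonneg (CFAux.K_nonneg α _ h1α), hf₀def,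
          Set.indicator_of_mem (hIocsub hτ), hkpdef,
          Set.indicator_of_mem (by simp only [Set.mem_Ici]; linarith [hτ.2] : t - τ ∈ Set.Ici (0:ℝ))]
        rw [Real.norm_eq_abs]
      have hmulint : Integrable (fun τ => f₀ τ * kp (t - τ)) := by
        have := Integrable.bdd_mul (c := 1/(1-α)) hf₀int
          ((hkpmeas.comp (measurable_const.sub measurable_id)).aestronglyMeasurable)
          (Filter.Eventually.of_forall fun τ => hkple (t - τ))
        exact this.congr (Filter.Eventually.of_forall fun τ => mul_comm _ _)
      have s3 : (∫ τ in Set.Ioc a t, f₀ τ * kp (t - τ)) ≤ ∫ τ, f₀ τ * kp (t - τ) :=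
        setIntegral_le_integral hmulint
          (Filter.Eventually.of_forall fun τ => mul_nonneg (hf₀nn τ) (hkpnn _))
      rw [Real.norm_eq_abs] at s1
      rw [hAval t]
      calc |∫ τ in a..t, (f' τ - φ τ) * CFAux.K α (t - τ)| ≤ _ := s1
      _ = _ := s2
      _ ≤ _ := s3
    calc |cfD a α f' t - f' t|
        = |(cfD a α f' t - (∫ τ in a..t, φ τ * CFAux.K α (t - τ)))
            + ((∫ τ in a..t, φ τ * CFAux.K α (t - τ)) - φ t) + (φ t - f' t)| := by
          congr 1; ring
    _ ≤ |(cfD a α f' t - (∫ τ in a..t, φ τ * CFAux.K α (t - τ)))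
            + ((∫ τ in a..t, φ τ * CFAux.K α (t - τ)) - φ t)| + |φ t - f' t| := abs_add_le _ _
    _ ≤ |cfD a α f' t - (∫ τ in a..t, φ τ * CFAux.K α (t - τ))|
          + |(∫ τ in a..t, φ τ * CFAux.K α (t - τ)) - φ t| + |φ t - f' t| := by
          have := abs_add_le (cfD a α f' t - (∫ τ in a..t, φ τ * CFAux.K α (t - τ)))
            ((∫ τ in a..t, φ τ * CFAux.K α (t - τ)) - φ t)
          linarith
    _ ≤ A t + |(∫ τ in a..t, φ τ * CFAux.K α (t - τ)) - φ t| + |φ t - f' t| := by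
          have h2 := le_refl (|(∫ τ in a..t, φ τ * CFAux.K α (t - τ)) - φ t| + |φ t - f' t|)
          linarith [hbound1]
  -- integrabilities of the three majorants on Ioo a b
  have hint1 : IntegrableOn A (Set.Ioo a b) := hAint.integrableOn
  have hint2 : IntegrableOn (fun t => |(∫ τ in a..t, φ τ * CFAux.K α (t - τ)) - φ t|)
      (Set.Ioo a b) :=
    ((((CFAux.cont_conv φcont a α).sub φcont).abs).integrableOn_Icc).mono_set
      Set.Ioo_subset_Icc_self
  have hint3 : IntegrableOn (fun t => |φ t - f' t|) (Set.Ioo a b) :=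
    (φint.integrableOn.sub hf').abs
  -- main integral inequality
  have hmain : (∫ t in Set.Ioo a b, |cfD a α f' t - f' t|)
      ≤ (∫ t in Set.Ioo a b, A t)
        + (∫ t in Set.Ioo a b, |(∫ τ in a..t, φ τ * CFAux.K α (t - τ)) - φ t|)
        + ∫ t in Set.Ioo a b, |φ t - f' t| := by
    have step : (∫ t in Set.Ioo a b, |cfD a α f' t - f' t|)
        ≤ ∫ t in Set.Ioo a b,
            (A t + |(∫ τ in a..t, φ τ * CFAux.K α (t - τ)) - φ t| + |φ t - f' t|) := by
      refine integral_mono_of_nonneg (Filter.Eventually.of_forall fun t => abs_nonneg _)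
        ((hint1.add hint2).add hint3) ?_
      filter_upwards [ae_restrict_mem measurableSet_Ioo] with t ht
      exact hpt t ht
    have e2 : (∫ t in Set.Ioo a b,
        (A t + |(∫ τ in a..t, φ τ * CFAux.K α (t - τ)) - φ t| + |φ t - f' t|))
        = (∫ t in Set.Ioo a b, A t)
          + (∫ t in Set.Ioo a b, |(∫ τ in a..t, φ τ * CFAux.K α (t - τ)) - φ t|)
          + ∫ t in Set.Ioo a b, |φ t - f' t| := by
      have hint12 : IntegrableOn
          (fun t => A t + |(∫ τ in a..t, φ τ * CFAux.K α (t - τ)) - φ t|)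
          (Set.Ioo a b) := hint1.add hint2
      simp only [integral_add hint12 hint3, integral_add hint1 hint2]
    linarith [step, e2]
  -- bound each term
  have hT1 : (∫ t in Set.Ioo a b, A t) ≤ 2*η :=
    le_trans (setIntegral_le_integral hAint (Filter.Eventually.of_forall hAnn)) hIA
  have hT3 : (∫ t in Set.Ioo a b, |φ t - f' t|) ≤ η := by
    have e1 : ∫ t in Set.Ioo a b, |φ t - f' t| = ∫ t in Set.Ioo a b, ‖g t - φ t‖ := by
      refine setIntegral_congr_fun measurableSet_Ioo (fun t ht => ?_)
      rw [hgdef, Set.indicator_of_mem ht, Real.norm_eq_abs, abs_sub_comm]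
    rw [e1]
    have hle : (∫ t in Set.Ioo a b, ‖g t - φ t‖) ≤ ∫ t, ‖g t - φ t‖ :=
      setIntegral_le_integral hgφint
        (Filter.Eventually.of_forall fun t => norm_nonneg (g t - φ t))
    linarith [hle, φclose]
  -- finish
  rw [Real.dist_eq, sub_zero,
    abs_of_nonneg (integral_nonneg fun t => abs_nonneg (cfD a α f' t - f' t))]
  have : (∫ t in Set.Ioo a b, |cfD a α f' t - f' t|) ≤ 2*η + η + η := by
    linarith [hmain, hT1, hT3, hB]
  calc (∫ t in Set.Ioo a b, |cfD a α f' t - f' t|) ≤ 2*η + η + η := this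
  _ < ε := by rw [hηdef]; linarith
end

section
/- Let -∞ < a < b < ∞ and let f be twice continuously differentiable on [a,b]. Then for every t ∈ (a,b], lim_{α→1⁻} ᶜᶠ_aDᵅf(t) = f'(t), i.e. the Caputo–Fabrizio fractional derivative of f of order α converges pointwise on (a,b] to the ordinary derivative as α increases to 1. -/
open MeasureTheory Filter Set

lemma cf_exp_integral (a t k : ℝ) (hk : k ≠ 0) :
    ∫ τ in a..t, Real.exp (-k * (t - τ)) = (1 - Real.exp (-k * (t - a))) / k := by
  have h : ∀ τ ∈ Set.uIcc a t, HasDerivAt (fun τ => Real.exp (-k * (t - τ)) / k)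
      (Real.exp (-k * (t - τ))) τ := by
    intro τ _
    have h1 : HasDerivAt (fun τ : ℝ => -k * (t - τ)) k τ := by
      simpa using ((hasDerivAt_id τ).const_sub t).const_mul (-k)
    have := h1.exp.div_const k
    simpa [mul_div_cancel_right₀ _ hk] using this
  rw [intervalIntegral.integral_eq_sub_of_hasDerivAt h
    (Continuous.intervalIntegrable (by continuity) a t)]
  simp
  ring

lemma cf_lin_integral (a t k : ℝ) (hk : 0 < k) (hat : a ≤ t) :
    ∫ τ in a..t, (t - τ) * Real.exp (-k * (t - τ)) ≤ 1 / k ^ 2 := by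
  have h : ∀ τ ∈ Set.uIcc a t, HasDerivAt
      (fun τ => ((t - τ) / k + 1 / k ^ 2) * Real.exp (-k * (t - τ)))
      ((t - τ) * Real.exp (-k * (t - τ))) τ := by
    intro τ _
    have h1 : HasDerivAt (fun τ : ℝ => -k * (t - τ)) k τ := by
      simpa using ((hasDerivAt_id τ).const_sub t).const_mul (-k)
    have h2 := (((hasDerivAt_id τ).const_sub t).div_const k).add_const (1 / k ^ 2)
    have := h2.mul h1.exp
    refine this.congr_deriv ?_
    simp only [id_eq]
    field_simp [hk.ne']
    ring
  rw [intervalIntegral.integral_eq_sub_of_hasDerivAt h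
    (Continuous.intervalIntegrable (by continuity) a t)]
  have hpos : 0 ≤ ((t - a) / k + 1 / k ^ 2) * Real.exp (-k * (t - a)) :=
    mul_nonneg (add_nonneg (div_nonneg (by linarith) hk.le) (by positivity))
      (Real.exp_nonneg _)
  simp only [sub_self, mul_zero, zero_div, zero_add, Real.exp_zero, mul_one]
  linarith

lemma cf_k_tendsto : Tendsto (fun α : ℝ => α / (1 - α)) (nhdsWithin 1 (Set.Iio 1)) atTop := by
  have h1 : Tendsto (fun α : ℝ => 1 - α) (nhdsWithin 1 (Set.Iio 1)) (nhdsWithin 0 (Set.Ioi 0)) := by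
    apply tendsto_nhdsWithin_of_tendsto_nhds_of_eventually_within
    · have : Tendsto (fun α : ℝ => 1 - α) (nhds 1) (nhds (1 - 1)) :=
        (continuous_const.sub continuous_id).tendsto 1
      simpa using this.mono_left nhdsWithin_le_nhds
    · filter_upwards [self_mem_nhdsWithin] with α (hα : α < 1)
      simpa using hα
  have h2 : Tendsto (fun α : ℝ => (1 - α)⁻¹) (nhdsWithin 1 (Set.Iio 1)) atTop :=
    tendsto_inv_nhdsGT_zero.comp h1
  have h3 : Tendsto (fun α : ℝ => α) (nhdsWithin 1 (Set.Iio 1)) (nhds 1) :=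
    tendsto_id.mono_left nhdsWithin_le_nhds
  simpa [div_eq_mul_inv] using h3.pos_mul_atTop one_pos h2

lemma cf_alg1 (M α : ℝ) (h0 : α ≠ 0) (h1 : (1:ℝ) - α ≠ 0) :
    (1 / (1 - α)) * (M * (1 / (α / (1 - α)) ^ 2)) = M * ((1 - α) / α ^ 2) := by
  field_simp

lemma cf_Ioo_mem : Set.Ioo (0:ℝ) 1 ∈ nhdsWithin (1:ℝ) (Set.Iio 1) := by
  rw [mem_nhdsWithin]
  exact ⟨Set.Ioi 0, isOpen_Ioi, by norm_num, fun x hx => ⟨hx.1, hx.2⟩⟩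

/-- For `f ∈ C²[a,b]`, `ᶜᶠ_aDᵅf(t) → f'(t)` as `α → 1⁻`, for every `t ∈ (a,b]`. -/
theorem cf_pointwise_tendsto (a b : ℝ) (hab : a < b) (f f' f'' : ℝ → ℝ)
    (hderiv : ∀ t ∈ Set.Icc a b, HasDerivWithinAt f (f' t) (Set.Icc a b) t)
    (hderiv' : ∀ t ∈ Set.Icc a b, HasDerivWithinAt f' (f'' t) (Set.Icc a b) t)
    (hcont : ContinuousOn f'' (Set.Icc a b)) :
    ∀ t ∈ Set.Ioc a b,
      Tendsto (fun α => cfD a α f' t) (nhdsWithin 1 (Set.Iio 1)) (nhds (f' t)) := by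
  intro t ht
  obtain ⟨hat, htb⟩ := ht
  have htmem : t ∈ Set.Icc a b := ⟨hat.le, htb⟩
  have hf'cont : ContinuousOn f' (Set.Icc a b) := fun x hx => (hderiv' x hx).continuousWithinAt
  obtain ⟨M, hM⟩ := isCompact_Icc.exists_bound_of_continuousOn hcont
  have hM0 : 0 ≤ M := le_trans (norm_nonneg _) (hM t htmem)
  have hlip : ∀ τ ∈ Set.Icc a b, |f' τ - f' t| ≤ M * |τ - t| := by
    intro τ hτ
    have := (convex_Icc a b).norm_image_sub_le_of_norm_hasDerivWithin_le hderiv' hM htmem hτ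
    simpa [Real.norm_eq_abs] using this
  have hsub : Set.uIcc a t ⊆ Set.Icc a b := by
    rw [Set.uIcc_of_le hat.le]
    exact Set.Icc_subset_Icc le_rfl htb
  set A : ℝ → ℝ := fun α => (1 / α) * (1 - Real.exp (-(α / (1 - α)) * (t - a))) with hA
  set R : ℝ → ℝ := fun α =>
    (1 / (1 - α)) * ∫ τ in a..t, (f' τ - f' t) * Real.exp (-(α / (1 - α)) * (t - τ)) with hR
  -- decomposition identity on Ioo 0 1
  have hdecomp : ∀ α ∈ Set.Ioo (0:ℝ) 1, cfD a α f' t = f' t * A α + R α := by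
    intro α hα
    obtain ⟨hα0, hα1⟩ := hα
    have h1α : (0:ℝ) < 1 - α := by linarith
    have hkpos : 0 < α / (1 - α) := div_pos hα0 h1α
    have hfint : IntervalIntegrable
        (fun τ => f' τ * Real.exp (-(α / (1 - α)) * (t - τ))) volume a t :=
      ((hf'cont.mono hsub).mul (Real.continuous_exp.comp
        (continuous_const.mul (continuous_const.sub continuous_id))).continuousOn).intervalIntegrable
    have hcint : IntervalIntegrable
        (fun τ => f' t * Real.exp (-(α / (1 - α)) * (t - τ))) volume a t :=
      (continuous_const.mul (Real.continuous_exp.comp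
        (continuous_const.mul (continuous_const.sub continuous_id)))).intervalIntegrable a t
    have e1 : (∫ τ in a..t, (f' τ - f' t) * Real.exp (-(α / (1 - α)) * (t - τ)))
        = (∫ τ in a..t, f' τ * Real.exp (-(α / (1 - α)) * (t - τ)))
          - ∫ τ in a..t, f' t * Real.exp (-(α / (1 - α)) * (t - τ)) := by
      rw [← intervalIntegral.integral_sub hfint hcint]
      congr 1
      ext τ
      ring
    have e2 : (∫ τ in a..t, f' t * Real.exp (-(α / (1 - α)) * (t - τ)))
        = f' t * ∫ τ in a..t, Real.exp (-(α / (1 - α)) * (t - τ)) :=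
      intervalIntegral.integral_const_mul _ _
    have hsplit : (∫ τ in a..t, f' τ * Real.exp (-(α / (1 - α)) * (t - τ)))
        = (∫ τ in a..t, (f' τ - f' t) * Real.exp (-(α / (1 - α)) * (t - τ)))
          + f' t * ∫ τ in a..t, Real.exp (-(α / (1 - α)) * (t - τ)) := by
      rw [e1, e2]; ring
    rw [cfD, hsplit, cf_exp_integral a t _ hkpos.ne']
    rw [hA, hR]
    have : (1 - α) * (α / (1 - α)) = α := by field_simp
    field_simp
    ring
  -- limit of A
  have hAlim : Tendsto A (nhdsWithin 1 (Set.Iio 1)) (nhds 1) := by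
    have hexp : Tendsto (fun α : ℝ => Real.exp (-(α / (1 - α)) * (t - a)))
        (nhdsWithin 1 (Set.Iio 1)) (nhds 0) := by
      have h1 : Tendsto (fun α : ℝ => α / (1 - α) * (t - a)) (nhdsWithin 1 (Set.Iio 1)) atTop :=
        cf_k_tendsto.atTop_mul_const (by linarith)
      have := Real.tendsto_exp_neg_atTop_nhds_zero.comp h1
      simpa [Function.comp_def, neg_mul] using this
    have hinv : Tendsto (fun α : ℝ => 1 / α) (nhdsWithin 1 (Set.Iio 1)) (nhds 1) := by
      have : Tendsto (fun α : ℝ => 1 / α) (nhds 1) (nhds (1 / 1)) :=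
        (continuousAt_const.div continuousAt_id one_ne_zero)
      simpa using this.mono_left nhdsWithin_le_nhds
    have hsublim : Tendsto (fun α : ℝ => 1 - Real.exp (-(α / (1 - α)) * (t - a)))
        (nhdsWithin 1 (Set.Iio 1)) (nhds (1 - 0)) := tendsto_const_nhds.sub hexp
    have h := hinv.mul hsublim
    rw [hA]
    simpa using h
  -- limit of R via squeeze
  have hRlim : Tendsto R (nhdsWithin 1 (Set.Iio 1)) (nhds 0) := by
    rw [tendsto_zero_iff_norm_tendsto_zero]
    apply squeeze_zero' (Eventually.of_forall fun α => norm_nonneg _)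
    · show ∀ᶠ α in nhdsWithin 1 (Set.Iio 1), ‖R α‖ ≤ M * ((1 - α) / α ^ 2)
      filter_upwards [cf_Ioo_mem] with α hα
      obtain ⟨hα0, hα1⟩ := hα
      have h1α : (0:ℝ) < 1 - α := by linarith
      have hkpos : 0 < α / (1 - α) := div_pos hα0 h1α
      have hexpc : Continuous fun τ : ℝ => Real.exp (-(α / (1 - α)) * (t - τ)) :=
        Real.continuous_exp.comp (continuous_const.mul (continuous_const.sub continuous_id))
      have hfint : IntervalIntegrable
          (fun τ => |(f' τ - f' t) * Real.exp (-(α / (1 - α)) * (t - τ))|) volume a t := by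
        apply ContinuousOn.intervalIntegrable
        exact (((hf'cont.mono hsub).sub continuousOn_const).mul hexpc.continuousOn).abs
      have hgint : IntervalIntegrable
          (fun τ => M * ((t - τ) * Real.exp (-(α / (1 - α)) * (t - τ)))) volume a t :=
        (continuous_const.mul (((continuous_const.sub continuous_id)).mul hexpc)).intervalIntegrable a t
      have hbound : ∀ τ ∈ Set.Icc a t,
          |(f' τ - f' t) * Real.exp (-(α / (1 - α)) * (t - τ))|
            ≤ M * ((t - τ) * Real.exp (-(α / (1 - α)) * (t - τ))) := by
        intro τ hτ
        have hτab : τ ∈ Set.Icc a b := ⟨hτ.1, le_trans hτ.2 htb⟩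
        have h1 := hlip τ hτab
        have habs : |τ - t| = t - τ := by
          rw [abs_sub_comm]
          exact abs_of_nonneg (by linarith [hτ.2])
        rw [abs_mul, abs_of_pos (Real.exp_pos _)]
        calc |f' τ - f' t| * Real.exp (-(α / (1 - α)) * (t - τ))
            ≤ (M * (t - τ)) * Real.exp (-(α / (1 - α)) * (t - τ)) := by
              apply mul_le_mul_of_nonneg_right _ (Real.exp_nonneg _)
              rw [← habs]; exact h1
          _ = M * ((t - τ) * Real.exp (-(α / (1 - α)) * (t - τ))) := by ring
      have hint : |∫ τ in a..t, (f' τ - f' t) * Real.exp (-(α / (1 - α)) * (t - τ))|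
          ≤ M * (1 / (α / (1 - α)) ^ 2) := by
        calc |∫ τ in a..t, (f' τ - f' t) * Real.exp (-(α / (1 - α)) * (t - τ))|
            ≤ ∫ τ in a..t, |(f' τ - f' t) * Real.exp (-(α / (1 - α)) * (t - τ))| :=
              intervalIntegral.abs_integral_le_integral_abs hat.le
          _ ≤ ∫ τ in a..t, M * ((t - τ) * Real.exp (-(α / (1 - α)) * (t - τ))) :=
              intervalIntegral.integral_mono_on hat.le hfint hgint hbound
          _ = M * ∫ τ in a..t, (t - τ) * Real.exp (-(α / (1 - α)) * (t - τ)) :=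
              intervalIntegral.integral_const_mul _ _
          _ ≤ M * (1 / (α / (1 - α)) ^ 2) :=
              mul_le_mul_of_nonneg_left (cf_lin_integral a t _ hkpos hat.le) hM0
      have : ‖R α‖ = (1 / (1 - α)) * |∫ τ in a..t, (f' τ - f' t) *
          Real.exp (-(α / (1 - α)) * (t - τ))| := by
        rw [hR, Real.norm_eq_abs, abs_mul, abs_of_pos (by positivity : (0:ℝ) < 1 / (1 - α))]
      rw [this]
      calc (1 / (1 - α)) * |∫ τ in a..t, (f' τ - f' t) * Real.exp (-(α / (1 - α)) * (t - τ))|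
          ≤ (1 / (1 - α)) * (M * (1 / (α / (1 - α)) ^ 2)) :=
            mul_le_mul_of_nonneg_left hint (by positivity)
        _ = M * ((1 - α) / α ^ 2) := cf_alg1 M α hα0.ne' h1α.ne'
    · have : Tendsto (fun α : ℝ => M * ((1 - α) / α ^ 2)) (nhds 1)
          (nhds (M * ((1 - 1) / 1 ^ 2))) := by
        apply Tendsto.const_mul
        apply Tendsto.div
        · exact (continuous_const.sub continuous_id).tendsto 1
        · exact (continuous_pow 2).tendsto 1
        · norm_num
      simpa using this.mono_left nhdsWithin_le_nhds
  -- combine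
  have hmain : Tendsto (fun α => f' t * A α + R α) (nhdsWithin 1 (Set.Iio 1))
      (nhds (f' t * 1 + 0)) := (tendsto_const_nhds.mul hAlim).add hRlim
  rw [mul_one, add_zero] at hmain
  apply hmain.congr'
  filter_upwards [cf_Ioo_mem] with α hα
  exact (hdecomp α hα).symm
end

section
/- Let b > 0 and f(t) = e^t on [0,b]. Then for every β ∈ (0,1), the Caputo–Fabrizio L¹ error satisfies E_{f,1}(β) = ‖ᶜᶠ₀D^{1−β}f − f'‖_{L¹(0,b)} = (β/(1−β))·(1 − e^{−((1−β)/β)·b}), and consequently lim_{β→0⁺} E_{f,1}(β)/β = 1. In particular the Caputo–Fabrizio L¹ error is not o(β) in general. -/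
open MeasureTheory Filter Set

lemma exp_linear_integral (k d a t : ℝ) (hk : k ≠ 0) :
    ∫ τ in a..t, Real.exp (k * τ + d) =
      (Real.exp (k * t + d) - Real.exp (k * a + d)) / k := by
  have h : ∀ τ : ℝ, HasDerivAt (fun x => Real.exp (k * x + d) / k)
      (Real.exp (k * τ + d)) τ := by
    intro τ
    have h1 : HasDerivAt (fun x : ℝ => k * x + d) k τ := by
      simpa using ((hasDerivAt_id τ).const_mul k).add_const d
    have := h1.exp.div_const k
    simpa [mul_div_cancel_right₀ _ hk] using this
  have hint : IntervalIntegrable (fun τ => Real.exp (k * τ + d)) volume a t :=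
    (Real.continuous_exp.comp (by continuity)).intervalIntegrable a t
  rw [intervalIntegral.integral_eq_sub_of_hasDerivAt (fun τ _ => h τ) hint]
  ring

/-- For `f(t) = e^t` on `[0,b]` (so `f' = exp`), the Caputo–Fabrizio L¹ error
equals `(β/(1-β))(1 - e^{-((1-β)/β) b})` for every `β ∈ (0,1)`, and
consequently `E_{f,1}(β)/β → 1` as `β → 0⁺`. -/
theorem cf_exp_error (b : ℝ) (hb : 0 < b) :
    (∀ β ∈ Set.Ioo (0 : ℝ) 1,
        (∫ t in Set.Ioo 0 b, |cfD 0 (1 - β) Real.exp t - Real.exp t|) =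
          (β / (1 - β)) * (1 - Real.exp (-((1 - β) / β) * b))) ∧
    Tendsto (fun β : ℝ =>
        (∫ t in Set.Ioo 0 b, |cfD 0 (1 - β) Real.exp t - Real.exp t|) / β)
      (nhdsWithin 0 (Set.Ioi 0)) (nhds 1) := by
  have part1 : ∀ β ∈ Set.Ioo (0 : ℝ) 1,
      (∫ t in Set.Ioo 0 b, |cfD 0 (1 - β) Real.exp t - Real.exp t|) =
        (β / (1 - β)) * (1 - Real.exp (-((1 - β) / β) * b)) := by
    intro β hβ
    obtain ⟨hβ0, hβ1⟩ := hβ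
    have hβne : β ≠ 0 := ne_of_gt hβ0
    have h1β : (0:ℝ) < 1 - β := by linarith
    have h1βne : (1:ℝ) - β ≠ 0 := ne_of_gt h1β
    set c : ℝ := (1 - β) / β with hc
    have hcpos : 0 < c := div_pos h1β hβ0
    have hcne : c ≠ 0 := ne_of_gt hcpos
    have key : ∀ t : ℝ, |cfD 0 (1 - β) Real.exp t - Real.exp t| = Real.exp (-c * t) := by
      intro t
      have h1c : 1 + c = 1 / β := by
        field_simp [hc]
        rw [hc, add_mul, div_mul_cancel₀ _ hβne]; ring
      have hrw : ∀ τ : ℝ, Real.exp τ * Real.exp (-((1 - β) / (1 - (1 - β))) * (t - τ))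
          = Real.exp ((1 + c) * τ + (-c * t)) := by
        intro τ
        rw [← Real.exp_add]
        congr 1
        have : 1 - (1 - β) = β := by ring
        rw [this, ← hc]
        ring
      have h1cne : (1:ℝ) + c ≠ 0 := by rw [h1c]; positivity
      have : cfD 0 (1 - β) Real.exp t =
          Real.exp t - Real.exp (-c * t) := by
        unfold cfD
        rw [show (1:ℝ) - (1 - β) = β by ring]
        simp_rw [show (1:ℝ) - (1 - β) = β from by ring] at hrw ⊢
        rw [intervalIntegral.integral_congr (fun τ _ => hrw τ),
          exp_linear_integral _ _ _ _ h1cne]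
        have e1 : (1 + c) * t + (-c * t) = t := by ring
        have e2 : (1 + c) * 0 + (-c * t) = -c * t := by ring
        rw [e1, e2, h1c]
        field_simp
      rw [this]
      simp [abs_of_pos, Real.exp_pos]
    simp_rw [key]
    rw [← MeasureTheory.integral_Ioc_eq_integral_Ioo,
      ← intervalIntegral.integral_of_le hb.le]
    have := exp_linear_integral (-c) 0 0 b (neg_ne_zero.mpr hcne)
    simp only [add_zero, mul_zero, Real.exp_zero] at this
    rw [this]
    have : β / (1 - β) = 1 / c := by rw [hc]; field_simp
    rw [this, div_neg, ← neg_div, neg_sub, one_div, inv_mul_eq_div]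
  refine ⟨part1, ?_⟩
  have hmem : Set.Ioo (0:ℝ) 1 ∈ nhdsWithin (0:ℝ) (Set.Ioi 0) :=
    Ioo_mem_nhdsGT_of_mem (by norm_num : (0:ℝ) ∈ Set.Ico (0:ℝ) 1)
  have h1b : Tendsto (fun β : ℝ => 1 - β) (nhdsWithin 0 (Set.Ioi 0)) (nhds 1) := by
    have : Tendsto (fun β : ℝ => 1 - β) (nhds 0) (nhds 1) := by
      have h := ((continuous_const (y := (1:ℝ))).sub continuous_id).tendsto (0:ℝ)
      simpa [Pi.sub_def] using h
    exact this.mono_left nhdsWithin_le_nhds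
  have hinv : Tendsto (fun β : ℝ => β⁻¹) (nhdsWithin 0 (Set.Ioi 0)) atTop :=
    tendsto_inv_nhdsGT_zero
  have h2 : Tendsto (fun β : ℝ => (1 - β) / β) (nhdsWithin 0 (Set.Ioi 0)) atTop := by
    simpa [div_eq_mul_inv] using h1b.pos_mul_atTop one_pos hinv
  have h3 : Tendsto (fun β : ℝ => -((1 - β) / β) * b) (nhdsWithin 0 (Set.Ioi 0)) atBot := by
    have := (h2.atTop_mul_const hb)
    have hneg := tendsto_neg_atTop_atBot.comp this
    simpa [Function.comp_def, neg_mul] using hneg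
  have hexp : Tendsto (fun β : ℝ => Real.exp (-((1 - β) / β) * b))
      (nhdsWithin 0 (Set.Ioi 0)) (nhds 0) := Real.tendsto_exp_atBot.comp h3
  have h1 : Tendsto (fun β : ℝ => 1 / (1 - β)) (nhdsWithin 0 (Set.Ioi 0)) (nhds 1) := by
    have h := (tendsto_const_nhds (x := (1:ℝ))).div h1b one_ne_zero
    simpa [Pi.div_def, one_div] using h
  have hg : Tendsto (fun β : ℝ => (1 / (1 - β)) * (1 - Real.exp (-((1 - β) / β) * b)))
      (nhdsWithin 0 (Set.Ioi 0)) (nhds 1) := by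
    have h := h1.mul ((tendsto_const_nhds (x := (1:ℝ))).sub hexp)
    simpa using h
  refine hg.congr' ?_
  filter_upwards [hmem] with β hβ
  rw [part1 β hβ]
  have hβne : β ≠ 0 := ne_of_gt hβ.1
  have h1βne : (1:ℝ) - β ≠ 0 := by have := hβ.2; intro h; linarith [hβ.2]
  field_simp
end

section
/- Let m ∈ ℕ with m ≥ 2 and β ∈ (0,1). If v > 0 satisfies Γ(m)·E_{1,m}(−((1−β)/β)·v) = β, where E_{1,m} is the Mittag-Leffler function, then v ≥ m−1. -/
open MeasureTheory Filter Set

/-- `W n s = (-1)^n (e^{-s} - ∑_{j<n} (-s)^j/j!)`, the (signed) Taylor remainder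
of `e^{-s}`. -/
noncomputable def W (n : ℕ) (s : ℝ) : ℝ :=
  (-1)^n * (Real.exp (-s) - ∑ j ∈ Finset.range n, (-s)^j / j.factorial)

lemma W_zero (n : ℕ) : W (n+1) 0 = 0 := by
  simp [W, Finset.sum_range_succ']

lemma W_succ (n : ℕ) (s : ℝ) : W (n+1) s = s^n / n.factorial - W n s := by
  have h : ((-1:ℝ))^n * (-s)^n = s^n := by rw [← mul_pow]; ring_nf
  simp only [W, Finset.sum_range_succ, pow_succ]
  linear_combination h / (n.factorial:ℝ)

lemma hasDerivAt_W (n : ℕ) (s : ℝ) : HasDerivAt (W (n+1)) (W n s) s := by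
  have he : HasDerivAt (fun s : ℝ => Real.exp (-s)) (-Real.exp (-s)) s := by
    simpa using (hasDerivAt_neg s).exp
  have hsum : HasDerivAt (fun s : ℝ => ∑ j ∈ Finset.range (n+1), (-s)^j / j.factorial)
      (-∑ j ∈ Finset.range n, (-s)^j / j.factorial) s := by
    have hterm : ∀ j : ℕ, HasDerivAt (fun s : ℝ => (-s)^j / j.factorial)
        (-(j * (-s)^(j-1)) / j.factorial) s := by
      intro j
      have := ((hasDerivAt_pow j (-s)).comp s (hasDerivAt_neg s))
      simpa [mul_comm, neg_div] using this.div_const (j.factorial : ℝ)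
    have h := HasDerivAt.fun_sum (fun j _ => hterm j) (u := Finset.range (n+1))
    refine h.congr_deriv (Eq.symm ?_)
    rw [Finset.sum_range_succ' (fun j => -(j * (-s)^(j-1)) / (j.factorial:ℝ))]
    simp only [Nat.cast_zero, zero_mul, neg_zero, zero_div, add_zero, Nat.cast_add,
      Nat.cast_one, Nat.add_sub_cancel, Nat.factorial_succ, Nat.cast_mul, Nat.cast_succ]
    rw [← Finset.sum_neg_distrib]
    apply Finset.sum_congr rfl
    intro j _
    have h1 : ((j:ℝ)+1) ≠ 0 := by positivity
    have h2 : (j.factorial:ℝ) ≠ 0 := by positivity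
    field_simp
  have h2 := (he.sub hsum).const_mul ((-1:ℝ)^(n+1))
  have hW : W n s = (-1:ℝ)^(n+1) * (-Real.exp (-s) - -∑ j ∈ Finset.range n, (-s)^j / ↑j.factorial) := by
    simp only [W, pow_succ]; ring
  rw [hW]
  exact h2

lemma contW (n : ℕ) : Continuous (W n) := by
  apply Continuous.mul continuous_const
  apply Continuous.sub (Real.continuous_exp.comp continuous_neg)
  exact continuous_finset_sum _ fun j _ => ((continuous_neg.pow j).div_const _)

lemma D_nonneg (n : ℕ) {s : ℝ} (hs : 0 ≤ s) : (n:ℝ) * W (n+1) s ≤ s * W n s := by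
  induction n generalizing s with
  | zero => simp [W]; positivity
  | succ n ih =>
    set f : ℝ → ℝ := fun t => t * W (n+1) t - ((n:ℝ)+1) * W (n+2) t with hf
    have hd : ∀ t : ℝ, HasDerivAt f (t * W n t - (n:ℝ) * W (n+1) t) t := by
      intro t
      have h1 := (hasDerivAt_id t).mul (hasDerivAt_W n t)
      have h2 := (hasDerivAt_W (n+1) t).const_mul ((n:ℝ)+1)
      refine (h1.sub h2).congr_deriv (Eq.symm ?_)
      simp only [id_eq]
      ring
    have hmono : MonotoneOn f (Set.Ici 0) := by
      apply monotoneOn_of_deriv_nonneg (convex_Ici 0)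
        (((continuous_id'.mul (contW (n+1))).sub (continuous_const.mul (contW (n+2)))).continuousOn)
        (fun t _ => (hd t).differentiableAt.differentiableWithinAt)
      intro t ht
      change 0 ≤ deriv f t
      rw [(hd t).deriv]
      have : (0:ℝ) ≤ t := le_of_lt (by simpa using ht)
      linarith [ih this]
    have h0 : f 0 = 0 := by simp [hf, W_zero]
    have := hmono (Set.self_mem_Ici) (Set.mem_Ici.2 hs) hs
    rw [h0] at this
    simp only [hf] at this
    push_cast
    linarith

lemma key (n : ℕ) {s : ℝ} (hs : 0 ≤ s) :
    (n:ℝ) * s^n ≤ (s + n) * (n.factorial * W n s) := by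
  have hf : (0:ℝ) < n.factorial := by positivity
  have h1 := D_nonneg n hs
  have expand : (s + n) * ((n.factorial:ℝ) * W n s)
      = (n.factorial:ℝ) * (s * W n s - n * W (n+1) s) + n * s^n := by
    rw [W_succ]
    field_simp
    ring
  rw [expand]
  nlinarith [mul_nonneg hf.le (sub_nonneg.2 h1)]

lemma ML_rep (n : ℕ) (s : ℝ) :
    Real.Gamma ((n:ℝ)+1) * mittagLeffler 1 ((n:ℝ)+1) (-s) * s^n
      = n.factorial * W n s := by
  have hf : Summable (fun j : ℕ => (-s)^j / (j.factorial:ℝ)) :=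
    Real.summable_pow_div_factorial _
  have hexp : Real.exp (-s) = ∑' j : ℕ, (-s)^j / j.factorial := by
    rw [Real.exp_eq_exp_ℝ, NormedSpace.exp_eq_tsum_div]
  have htail : (∑' k : ℕ, (-s)^(k+n) / ((k+n).factorial : ℝ))
      = Real.exp (-s) - ∑ j ∈ Finset.range n, (-s)^j / j.factorial := by
    rw [hexp, eq_sub_iff_add_eq, add_comm]
    exact hf.sum_add_tsum_nat_add n
  have hML : mittagLeffler 1 ((n:ℝ)+1) (-s) = ∑' k : ℕ, (-s)^k / ((k+n).factorial : ℝ) := by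
    unfold mittagLeffler
    congr 1; funext k
    rw [show (1:ℝ) * k + ((n:ℝ)+1) = ((k + n : ℕ) : ℝ) + 1 by push_cast; ring,
      Real.Gamma_nat_eq_factorial]
  have hGamma : Real.Gamma ((n:ℝ)+1) = n.factorial := Real.Gamma_nat_eq_factorial n
  rw [hML, hGamma]
  unfold W
  rw [← htail, ← tsum_mul_left, ← tsum_mul_left, ← tsum_mul_right, ← tsum_mul_left]
  apply tsum_congr
  intro k
  have h : ((-1:ℝ))^n * (-s)^n = s^n := by rw [← mul_pow]; ring_nf
  rw [pow_add]
  linear_combination (-((n.factorial:ℝ) * (-s)^k / ((k+n).factorial:ℝ))) * h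

/-- If `m ≥ 2`, `β ∈ (0,1)` and `v > 0` satisfies
`Γ(m) E_{1,m}(-((1-β)/β) v) = β`, then `v ≥ m - 1`. -/
theorem ml_root_lower_bound (m : ℕ) (hm : 2 ≤ m) (β : ℝ)
    (hβ : β ∈ Set.Ioo (0 : ℝ) 1) (v : ℝ) (hv : 0 < v)
    (heq : Real.Gamma m * mittagLeffler 1 m (-((1 - β) / β) * v) = β) :
    (m : ℝ) - 1 ≤ v := by
  obtain ⟨hβ0, hβ1⟩ := hβ
  set n := m - 1 with hn
  have hmn : m = n + 1 := by omega
  have hlam : 0 < (1 - β)/β := div_pos (by linarith) hβ0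
  set s := (1 - β)/β * v with hs
  have hs0 : 0 < s := mul_pos hlam hv
  have hcast : ((m:ℝ)) = (n:ℝ) + 1 := by rw [hmn]; push_cast; ring
  have harg : -((1 - β)/β) * v = -s := by rw [hs]; ring
  rw [harg, hcast] at heq
  have hrep := ML_rep n s
  rw [heq] at hrep
  have hkey := key n hs0.le
  rw [← hrep] at hkey
  have hsn : 0 < s^n := pow_pos hs0 n
  have h2 : (n:ℝ) ≤ (s + n) * β := by
    have := hkey
    rw [show (s + (n:ℝ)) * (β * s^n) = ((s + n) * β) * s^n by ring] at this
    exact le_of_mul_le_mul_right this hsn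
  have hsβ : s * β = (1 - β) * v := by
    rw [hs]; field_simp
  have hnv : (n:ℝ) ≤ v := by nlinarith
  rw [hcast]
  linarith
end
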